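/- arXiv:1512.07079 — 5 statements merged into one kernel-verified Lean document; each statement's English description precedes it below -/
import Mathlib

section
/- Let t ≥ 1 and let j_1 > j_2 > … > j_t ≥ 0 be integers, and set s = 2^{j_1} + 2^{j_2} + … + 2^{j_t}. Let f : ℝ → ℂ be a measurable function such that |f|^{2^{j_i + i}} is integrable on [0,1] for each 1 ≤ i ≤ t. Then ∫_0^1 |f(x)|^s dx ≤ ( ∏_{i=1}^{t−1} ( ∫_0^1 |f(x)|^{2^{j_i + i}} dx )^{1/2^i} ) · ( ∫_0^1 |f(x)|^{2^{j_t + t}} dx )^{1/2^t}. -/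
open Finset MeasureTheory


lemma my_integrable_pow_of_le {μ : Measure ℝ} [IsFiniteMeasure μ] {g : ℝ → ℝ}
    (hg : Measurable g) (hg0 : ∀ x, 0 ≤ g x) {a b : ℕ} (hab : a ≤ b)
    (hb : Integrable (fun x => g x ^ b) μ) : Integrable (fun x => g x ^ a) μ := by
  refine Integrable.mono' ((integrable_const 1).add hb) ((hg.pow_const a).aestronglyMeasurable)
    (Filter.Eventually.of_forall fun x => ?_)
  rw [Real.norm_of_nonneg (pow_nonneg (hg0 x) a)]
  simp only [Pi.add_apply]
  rcases le_total (g x) 1 with h | h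
  · have : g x ^ a ≤ 1 := pow_le_one₀ (hg0 x) h
    nlinarith [pow_nonneg (hg0 x) b]
  · have : g x ^ a ≤ g x ^ b := pow_le_pow_right₀ h hab
    linarith

lemma my_sum_pow_le : ∀ t : ℕ, 1 ≤ t → ∀ e : ℕ → ℕ, (∀ i, i + 1 < t → e (i + 1) < e i) →
    ∑ i ∈ range t, 2 ^ e i ≤ 2 ^ (e 0 + 1) - 1 := by
  intro t
  induction t with
  | zero => omega
  | succ t ih =>
    intro _ e he
    rcases Nat.eq_or_lt_of_le (Nat.one_le_iff_ne_zero.mpr (Nat.succ_ne_zero t)) with h | h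
    · have ht0 : t = 0 := by omega
      subst ht0
      simp
      have : 1 ≤ 2 ^ e 0 := Nat.one_le_two_pow
      omega
    · have ht1 : 1 ≤ t := by omega
      rw [Finset.sum_range_succ']
      have h2 := ih ht1 (fun i => e (i + 1)) (fun i hi => he (i + 1) (by omega))
      norm_num at h2
      have h3 : e 1 + 1 ≤ e 0 := he 0 (by omega)
      have h4 : (2:ℕ) ^ (e 1 + 1) ≤ 2 ^ e 0 := Nat.pow_le_pow_right (by norm_num) h3
      have h5 : (1:ℕ) ≤ 2 ^ (e 1 + 1) := Nat.one_le_two_pow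
      have : (2:ℕ) ^ (e 0 + 1) = 2 ^ e 0 + 2 ^ e 0 := by ring
      omega

lemma my_cs {μ : Measure ℝ} {g h : ℝ → ℝ} (hgm : Measurable g) (hhm : Measurable h)
    (hg0 : ∀ x, 0 ≤ g x) (hh0 : ∀ x, 0 ≤ h x)
    (hg2 : Integrable (fun x => g x ^ 2) μ) (hh2 : Integrable (fun x => h x ^ 2) μ) :
    ∫ x, g x * h x ∂μ ≤
      (∫ x, g x ^ 2 ∂μ) ^ ((1:ℝ)/2) * (∫ x, h x ^ 2 ∂μ) ^ ((1:ℝ)/2) := by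
  have hpq : (2:ℝ).HolderConjugate 2 := Real.HolderConjugate.two_two
  have hgL : MemLp g (ENNReal.ofReal 2) μ := by
    rw [show ENNReal.ofReal 2 = 2 by norm_num]
    exact (memLp_two_iff_integrable_sq hgm.aestronglyMeasurable).2 hg2
  have hhL : MemLp h (ENNReal.ofReal 2) μ := by
    rw [show ENNReal.ofReal 2 = 2 by norm_num]
    exact (memLp_two_iff_integrable_sq hhm.aestronglyMeasurable).2 hh2
  have := MeasureTheory.integral_mul_le_Lp_mul_Lq_of_nonneg hpq
    (Filter.Eventually.of_forall hg0) (Filter.Eventually.of_forall hh0) hgL hhL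
  have e1 : ∀ u : ℝ → ℝ, (fun a => u a ^ (2:ℝ)) = fun a => u a ^ (2:ℕ) := fun u =>
    funext fun a => by rw [show (2:ℝ) = ((2:ℕ):ℝ) by norm_num, Real.rpow_natCast]
  rw [e1 g, e1 h] at this
  exact this

lemma my_main (μ : Measure ℝ) [IsProbabilityMeasure μ] (g : ℝ → ℝ)
    (hgm : Measurable g) (hg0 : ∀ x, 0 ≤ g x) (t : ℕ) (ht : 1 ≤ t) :
    ∀ j : ℕ → ℕ, (∀ i, i + 1 < t → j (i + 1) < j i) →
    (∀ i < t, Integrable (fun x => g x ^ (2 ^ (j i + (i + 1)))) μ) →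
    ∫ x, g x ^ (∑ i ∈ range t, 2 ^ j i) ∂μ ≤
      (∏ i ∈ range (t - 1), (∫ x, g x ^ (2 ^ (j i + (i + 1))) ∂μ) ^ ((1:ℝ) / 2 ^ (i + 1))) *
      (∫ x, g x ^ (2 ^ (j (t - 1) + t)) ∂μ) ^ ((1:ℝ) / 2 ^ t) := by
  set I : ℕ → ℝ := fun n => ∫ x, g x ^ n ∂μ with hI
  have Inn : ∀ n, 0 ≤ I n := fun n => integral_nonneg fun x => pow_nonneg (hg0 x) n
  have I0 : I 0 = 1 := by simp [hI]
  have cs2 : ∀ a b : ℕ, Integrable (fun x => g x ^ (a * 2)) μ →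
      Integrable (fun x => g x ^ (b * 2)) μ →
      I (a + b) ≤ I (a * 2) ^ ((1:ℝ)/2) * I (b * 2) ^ ((1:ℝ)/2) := by
    intro a b ha hb
    have h2a : (fun x => (g x ^ a) ^ 2) = fun x => g x ^ (a * 2) :=
      funext fun x => by rw [← pow_mul]
    have h2b : (fun x => (g x ^ b) ^ 2) = fun x => g x ^ (b * 2) :=
      funext fun x => by rw [← pow_mul]
    have h := my_cs (μ := μ) (hgm.pow_const a) (hgm.pow_const b)
      (fun x => pow_nonneg (hg0 x) a) (fun x => pow_nonneg (hg0 x) b)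
      (by rw [h2a]; exact ha) (by rw [h2b]; exact hb)
    calc I (a + b) = ∫ x, (g x ^ a) * (g x ^ b) ∂μ := by simp [hI, pow_add]
      _ ≤ (∫ x, (g x ^ a) ^ 2 ∂μ) ^ ((1:ℝ)/2) * (∫ x, (g x ^ b) ^ 2 ∂μ) ^ ((1:ℝ)/2) := h
      _ = I (a * 2) ^ ((1:ℝ)/2) * I (b * 2) ^ ((1:ℝ)/2) := by rw [hI]; rw [h2a, h2b]
  induction t, ht using Nat.le_induction with
  | base =>
    intro j _ hint
    have hi0 : Integrable (fun x => g x ^ (2 ^ j 0 * 2)) μ := by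
      have := hint 0 one_pos
      simpa [pow_succ] using this
    have h := cs2 (2 ^ j 0) 0 hi0 (by simpa using (integrable_const (1:ℝ)))
    simp only [add_zero, Nat.zero_mul, I0, Real.one_rpow, mul_one] at h
    simp only [range_one, sum_singleton, Nat.sub_self, range_zero, prod_empty, one_mul]
    calc ∫ x, g x ^ 2 ^ j 0 ∂μ ≤ I (2 ^ j 0 * 2) ^ ((1:ℝ)/2) := h
      _ = I (2 ^ (j 0 + 1)) ^ ((1:ℝ)/2^1) := by rw [← pow_succ]; norm_num
  | succ t ht ih =>
    intro j hj hint
    obtain ⟨u, rfl⟩ : ∃ u, t = u + 1 := ⟨t - 1, by omega⟩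
    set j' : ℕ → ℕ := fun i => j (i + 1) + 1 with hj'
    have hj'dec : ∀ i, i + 1 < u + 1 → j' (i + 1) < j' i := by
      intro i hi
      have := hj (i + 1) (by omega)
      simp only [hj']
      omega
    have hint' : ∀ i < u + 1, Integrable (fun x => g x ^ (2 ^ (j' i + (i + 1)))) μ := by
      intro i hi
      have h := hint (i + 1) (by omega)
      have : j' i + (i + 1) = j (i + 1) + (i + 1 + 1) := by simp only [hj']; omega
      rw [this]; exact h
    have IH := ih j' hj'dec hint'
    simp only [Nat.add_sub_cancel] at IH
    -- the split of s
    have hsplit : ∑ i ∈ range (u + 1 + 1), 2 ^ j i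
        = 2 ^ j 0 + ∑ i ∈ range (u + 1), 2 ^ j (i + 1) := by
      rw [Finset.sum_range_succ']; ring
    have hdouble : (∑ i ∈ range (u + 1), 2 ^ j (i + 1)) * 2
        = ∑ i ∈ range (u + 1), 2 ^ j' i := by
      rw [Finset.sum_mul]
      refine Finset.sum_congr rfl fun i _ => ?_
      simp [hj', pow_succ]
    -- integrability of the doubled tail sum
    have hint0 : Integrable (fun x => g x ^ (2 ^ (j 0 + 1))) μ := by
      have := hint 0 (by omega); simpa using this
    have hbound : (∑ i ∈ range (u + 1), 2 ^ j' i) ≤ 2 ^ (j 0 + 1) := by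
      have h1 := my_sum_pow_le (u + 1) ht j' hj'dec
      have h2 : j' 0 + 1 ≤ j 0 + 1 := by
        have := hj 0 (by omega); simp only [hj']; omega
      have h3 : (2:ℕ) ^ (j' 0 + 1) ≤ 2 ^ (j 0 + 1) := Nat.pow_le_pow_right (by norm_num) h2
      omega
    have hintTail : Integrable (fun x => g x ^ ((∑ i ∈ range (u + 1), 2 ^ j (i + 1)) * 2)) μ := by
      rw [hdouble]
      exact my_integrable_pow_of_le hgm hg0 hbound hint0
    have hintHead : Integrable (fun x => g x ^ (2 ^ j 0 * 2)) μ := by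
      have := hint 0 (by omega); simpa [pow_succ] using this
    -- Cauchy-Schwarz
    have hCS := cs2 (2 ^ j 0) (∑ i ∈ range (u + 1), 2 ^ j (i + 1)) hintHead hintTail
    rw [hdouble] at hCS
    -- apply IH, raised to power 1/2
    have hIH2 : I (∑ i ∈ range (u + 1), 2 ^ j' i) ^ ((1:ℝ)/2) ≤
        ((∏ i ∈ range u, I (2 ^ (j' i + (i + 1))) ^ ((1:ℝ) / 2 ^ (i + 1))) *
          I (2 ^ (j' u + (u + 1))) ^ ((1:ℝ) / 2 ^ (u + 1))) ^ ((1:ℝ)/2) :=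
      Real.rpow_le_rpow (Inn _) IH (by norm_num)
    -- distribute the 1/2 power on the RHS
    have hdist : ((∏ i ∈ range u, I (2 ^ (j' i + (i + 1))) ^ ((1:ℝ) / 2 ^ (i + 1))) *
          I (2 ^ (j' u + (u + 1))) ^ ((1:ℝ) / 2 ^ (u + 1))) ^ ((1:ℝ)/2)
        = (∏ i ∈ range u, I (2 ^ (j' i + (i + 1))) ^ ((1:ℝ) / 2 ^ (i + 2))) *
          I (2 ^ (j' u + (u + 1))) ^ ((1:ℝ) / 2 ^ (u + 2)) := by
      rw [Real.mul_rpow (Finset.prod_nonneg fun i _ => Real.rpow_nonneg (Inn _) _)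
        (Real.rpow_nonneg (Inn _) _)]
      rw [← Real.finset_prod_rpow _ _ (fun i _ => Real.rpow_nonneg (Inn _) _)]
      congr 1
      · refine Finset.prod_congr rfl fun i _ => ?_
        rw [← Real.rpow_mul (Inn _)]
        congr 1
        rw [pow_succ (2:ℝ) (i + 1)]
        ring
      · rw [← Real.rpow_mul (Inn _)]
        congr 1
        rw [pow_succ (2:ℝ) (u + 1)]
        ring
    have step2 : I (2 ^ j 0 * 2) ^ ((1:ℝ)/2) * I (∑ i ∈ range (u + 1), 2 ^ j' i) ^ ((1:ℝ)/2) ≤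
        I (2 ^ j 0 * 2) ^ ((1:ℝ)/2) *
          ((∏ i ∈ range u, I (2 ^ (j' i + (i + 1))) ^ ((1:ℝ) / 2 ^ (i + 2))) *
            I (2 ^ (j' u + (u + 1))) ^ ((1:ℝ) / 2 ^ (u + 2))) := by
      refine mul_le_mul_of_nonneg_left ?_ (Real.rpow_nonneg (Inn _) _)
      rw [← hdist]
      exact hIH2
    have hfin : I (2 ^ j 0 * 2) ^ ((1:ℝ)/2) *
        ((∏ i ∈ range u, I (2 ^ (j' i + (i + 1))) ^ ((1:ℝ) / 2 ^ (i + 2))) *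
          I (2 ^ (j' u + (u + 1))) ^ ((1:ℝ) / 2 ^ (u + 2)))
      = (∏ i ∈ range (u + 1), I (2 ^ (j i + (i + 1))) ^ ((1:ℝ) / 2 ^ (i + 1))) *
          I (2 ^ (j (u + 1) + (u + 1 + 1))) ^ ((1:ℝ) / 2 ^ (u + 1 + 1)) := by
      rw [Finset.prod_range_succ']
      have e0 : I (2 ^ j 0 * 2) ^ ((1:ℝ)/2) = I (2 ^ (j 0 + (0 + 1))) ^ ((1:ℝ)/2 ^ (0 + 1)) := by
        rw [show 2 ^ j 0 * 2 = 2 ^ (j 0 + (0 + 1)) from by rw [pow_succ]]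
        norm_num
      have e1 : (∏ i ∈ range u, I (2 ^ (j' i + (i + 1))) ^ ((1:ℝ) / 2 ^ (i + 2)))
          = ∏ i ∈ range u, I (2 ^ (j (i + 1) + (i + 1 + 1))) ^ ((1:ℝ) / 2 ^ (i + 1 + 1)) := by
        refine Finset.prod_congr rfl fun i _ => ?_
        have h' : j' i + (i + 1) = j (i + 1) + (i + 1 + 1) := by simp only [hj']; omega
        rw [h']
      have e2 : I (2 ^ (j' u + (u + 1))) ^ ((1:ℝ) / 2 ^ (u + 2))
          = I (2 ^ (j (u + 1) + (u + 1 + 1))) ^ ((1:ℝ) / 2 ^ (u + 1 + 1)) := by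
        have h' : j' u + (u + 1) = j (u + 1) + (u + 1 + 1) := by simp only [hj']; omega
        rw [h']
      rw [e0, e1, e2]
      ring
    have goalsub : ∑ i ∈ range (u + 1 + 1 - 1), 2 ^ j i = ∑ i ∈ range (u + 1), 2 ^ j i := rfl
    simp only [Nat.add_sub_cancel]
    calc I (∑ i ∈ range (u + 1 + 1), 2 ^ j i)
        = I (2 ^ j 0 + ∑ i ∈ range (u + 1), 2 ^ j (i + 1)) := by rw [hsplit]
      _ ≤ I (2 ^ j 0 * 2) ^ ((1:ℝ)/2) * I (∑ i ∈ range (u + 1), 2 ^ j' i) ^ ((1:ℝ)/2) := hCS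
      _ ≤ _ := step2
      _ = _ := hfin
/-- `j 0 > j 1 > ⋯ > j (t-1) ≥ 0` are the (0-indexed) exponents
`j_1 > ⋯ > j_t` of the binary expansion `s = 2^{j_1} + ⋯ + 2^{j_t}`.  The paper's
index `i ∈ {1, …, t}` corresponds to the Lean index `i - 1 ∈ {0, …, t-1}`, so the
paper's exponent `2^{j_i + i}` is `2^(j i + (i+1))` here. -/
theorem stmt_7 (t : ℕ) (ht : 1 ≤ t) (j : ℕ → ℕ)
    (hj : ∀ i, i + 1 < t → j (i + 1) < j i)
    (s : ℕ) (hs : s = ∑ i ∈ Finset.range t, 2 ^ j i)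
    (f : ℝ → ℂ) (hf : Measurable f)
    (hint : ∀ i < t,
      IntervalIntegrable (fun x => ‖f x‖ ^ (2 ^ (j i + (i + 1)))) volume 0 1) :
    (∫ x in (0:ℝ)..1, ‖f x‖ ^ s) ≤
      (∏ i ∈ Finset.range (t - 1),
          (∫ x in (0:ℝ)..1, ‖f x‖ ^ (2 ^ (j i + (i + 1)))) ^ ((1 : ℝ) / 2 ^ (i + 1))) *
        (∫ x in (0:ℝ)..1, ‖f x‖ ^ (2 ^ (j (t - 1) + t))) ^ ((1 : ℝ) / 2 ^ t) := by
  subst hs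
  have h01 : (0:ℝ) ≤ 1 := zero_le_one
  simp only [intervalIntegral.integral_of_le h01]
  haveI : IsProbabilityMeasure (volume.restrict (Set.Ioc (0:ℝ) 1)) :=
    ⟨by simp [Real.volume_Ioc]⟩
  exact my_main (volume.restrict (Set.Ioc (0:ℝ) 1)) (fun x => ‖f x‖) hf.norm
    (fun x => norm_nonneg _) t ht j hj
    (fun i hi => (intervalIntegrable_iff_integrableOn_Ioc_of_le h01).mp (hint i hi))
end

section
/- Let k_1 and k_2 be positive integers. For n ≥ 1 let R⁺(n) denote the number of pairs of positive integers (x_1, x_2) with x_1^{k_1} + x_2^{k_2} = n. Then for every ε > 0 there exists a constant C > 0 such that for all n ≥ 1, R⁺(n) ≤ C · n^{ (1/2)(1/k_1 + 1/k_2) + ε }. -/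
lemma count_le_aux (k₁ k₂ : ℕ) (hk₁ : 0 < k₁) (hk₂ : 0 < k₂) (n : ℕ) (hn : 1 ≤ n) :
    (({p : ℕ × ℕ | 0 < p.1 ∧ 0 < p.2 ∧ p.1 ^ k₁ + p.2 ^ k₂ = n}.ncard : ℝ)) ≤
      (n : ℝ) ^ (1 / (k₁ : ℝ)) := by
  set S : Set (ℕ × ℕ) := {p : ℕ × ℕ | 0 < p.1 ∧ 0 < p.2 ∧ p.1 ^ k₁ + p.2 ^ k₂ = n} with hS
  set M : ℕ := ⌊(n : ℝ) ^ (1 / (k₁ : ℝ))⌋₊ with hM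
  have hk₁R : (0 : ℝ) < (k₁ : ℝ) := by exact_mod_cast hk₁
  have hinj : Set.InjOn Prod.fst S := by
    rintro ⟨a, b⟩ ⟨ha, hb, hab⟩ ⟨a', b'⟩ ⟨ha', hb', hab'⟩ h
    simp only at h hab hab' ha hb ha' hb'
    subst h
    have : b ^ k₂ = b' ^ k₂ := by omega
    have hb2 : b = b' := Nat.pow_left_injective hk₂.ne' this
    simp [hb2]
  have himg : Prod.fst '' S ⊆ ↑(Finset.Icc 1 M) := by
    rintro x ⟨⟨a, b⟩, ⟨ha, hb, hab⟩, rfl⟩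
    simp only at ha hb hab
    simp only [Finset.coe_Icc, Set.mem_Icc]
    refine ⟨ha, Nat.le_floor ?_⟩
    have hak : (a : ℝ) ^ (k₁ : ℕ) ≤ (n : ℝ) := by
      have : a ^ k₁ ≤ n := by omega
      exact_mod_cast this
    have h1 : ((a : ℝ) ^ (k₁ : ℕ)) ^ (1 / (k₁ : ℝ)) ≤ (n : ℝ) ^ (1 / (k₁ : ℝ)) :=
      Real.rpow_le_rpow (by positivity) hak (by positivity)
    calc (a : ℝ) = ((a : ℝ) ^ (k₁ : ℕ)) ^ (1 / (k₁ : ℝ)) := by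
          rw [← Real.rpow_natCast (a : ℝ) k₁, ← Real.rpow_mul (by positivity)]
          rw [mul_one_div, div_self (ne_of_gt hk₁R), Real.rpow_one]
      _ ≤ (n : ℝ) ^ (1 / (k₁ : ℝ)) := h1
  have hcard : S.ncard ≤ M := by
    have h1 : S.ncard = (Prod.fst '' S).ncard := (Set.ncard_image_of_injOn hinj).symm
    rw [h1]
    calc (Prod.fst '' S).ncard ≤ (↑(Finset.Icc 1 M) : Set ℕ).ncard :=
          Set.ncard_le_ncard himg (Finset.finite_toSet _)
      _ = (Finset.Icc 1 M).card := Set.ncard_coe_finset _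
      _ ≤ M := by simp [Nat.card_Icc]
  calc (S.ncard : ℝ) ≤ (M : ℝ) := by exact_mod_cast hcard
    _ ≤ (n : ℝ) ^ (1 / (k₁ : ℝ)) := Nat.floor_le (by positivity)

theorem stmt_13 (k₁ k₂ : ℕ) (hk₁ : 0 < k₁) (hk₂ : 0 < k₂) :
    ∀ ε : ℝ, 0 < ε → ∃ C : ℝ, 0 < C ∧ ∀ n : ℕ, 1 ≤ n →
      (({p : ℕ × ℕ | 0 < p.1 ∧ 0 < p.2 ∧ p.1 ^ k₁ + p.2 ^ k₂ = n}.ncard : ℝ)) ≤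
        C * (n : ℝ) ^ ((1 / 2) * (1 / (k₁ : ℝ) + 1 / (k₂ : ℝ)) + ε) := by
  intro ε hε
  refine ⟨1, one_pos, fun n hn => ?_⟩
  set S : Set (ℕ × ℕ) := {p : ℕ × ℕ | 0 < p.1 ∧ 0 < p.2 ∧ p.1 ^ k₁ + p.2 ^ k₂ = n} with hS
  have hnR : (1 : ℝ) ≤ (n : ℝ) := by exact_mod_cast hn
  have hnpos : (0 : ℝ) < (n : ℝ) := by linarith
  have h1 : (S.ncard : ℝ) ≤ (n : ℝ) ^ (1 / (k₁ : ℝ)) := count_le_aux k₁ k₂ hk₁ hk₂ n hn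
  -- swap to get the bound with k₂
  have hswap : Prod.swap '' S = {p : ℕ × ℕ | 0 < p.1 ∧ 0 < p.2 ∧ p.1 ^ k₂ + p.2 ^ k₁ = n} := by
    ext ⟨a, b⟩
    simp only [Set.mem_image, Set.mem_setOf_eq, hS, Prod.swap_eq_iff_eq_swap, Prod.exists]
    constructor
    · rintro ⟨x, y, ⟨hx, hy, hxy⟩, h⟩
      simp only [Prod.swap_prod_mk, Prod.mk.injEq] at h
      obtain ⟨rfl, rfl⟩ := h
      exact ⟨hy, hx, by omega⟩
    · rintro ⟨ha, hb, hab⟩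
      exact ⟨b, a, ⟨hb, ha, by omega⟩, rfl⟩
  have h2 : (S.ncard : ℝ) ≤ (n : ℝ) ^ (1 / (k₂ : ℝ)) := by
    have := count_le_aux k₂ k₁ hk₂ hk₁ n hn
    have hc : S.ncard = {p : ℕ × ℕ | 0 < p.1 ∧ 0 < p.2 ∧ p.1 ^ k₂ + p.2 ^ k₁ = n}.ncard := by
      rw [← hswap, Set.ncard_image_of_injective _ Prod.swap_injective]
    rw [hc]
    exact this
  have hc0 : (0 : ℝ) ≤ (S.ncard : ℝ) := Nat.cast_nonneg _
  set T : ℝ := (n : ℝ) ^ ((1 / 2 : ℝ) * (1 / (k₁ : ℝ) + 1 / (k₂ : ℝ))) with hT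
  have hT0 : 0 ≤ T := by positivity
  have hsq : (S.ncard : ℝ) ^ 2 ≤ T ^ 2 := by
    have hTsq : T ^ 2 = (n : ℝ) ^ (1 / (k₁ : ℝ)) * (n : ℝ) ^ (1 / (k₂ : ℝ)) := by
      rw [hT, ← Real.rpow_natCast _ 2, ← Real.rpow_mul (le_of_lt hnpos),
        ← Real.rpow_add hnpos]
      norm_num
      congr 1
      ring
    rw [hTsq, sq]
    exact mul_le_mul h1 h2 hc0 (by positivity)
  have hle : (S.ncard : ℝ) ≤ T := by nlinarith
  have hfinal : T ≤ (n : ℝ) ^ ((1 / 2 : ℝ) * (1 / (k₁ : ℝ) + 1 / (k₂ : ℝ)) + ε) :=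
    Real.rpow_le_rpow_of_exponent_le hnR (by linarith)
  rw [one_mul]
  linarith
end

section
/- Let k_1, k_2, k_3 be positive integers with k_1 ≥ 2 and k_2 ≥ 2. For n ≥ 1 let R⁺(n) denote the number of triples of positive integers (x_1, x_2, x_3) with x_1^{k_1} + x_2^{k_2} + x_3^{k_3} = n. Then for every ε > 0 there exists a constant C > 0 such that for all n ≥ 1, R⁺(n) ≤ C · n^{ (1/2)(1/k_1 + 1/k_2 + 1/k_3) + ε }. -/
open Finset

lemma pow_add_pow_lt {k e y y' : ℕ} (hk : 2 ≤ k) (he : 1 ≤ e) (h : y < y') :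
    (y + e) ^ k + y' ^ k < (y' + e) ^ k + y ^ k := by
  have key : ∀ z : ℕ, ((z : ℤ) + e) ^ k - (z : ℤ) ^ k
      = e * ∑ i ∈ Finset.range k, ((z : ℤ) + e) ^ i * (z : ℤ) ^ (k - 1 - i) := by
    intro z
    have h2 := geom_sum₂_mul ((z : ℤ) + e) ((z : ℤ)) k
    rw [← h2]; ring
  have hsum : ∑ i ∈ Finset.range k, ((y : ℤ) + e) ^ i * (y : ℤ) ^ (k - 1 - i)
      < ∑ i ∈ Finset.range k, ((y' : ℤ) + e) ^ i * (y' : ℤ) ^ (k - 1 - i) := by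
    have hyy : (y : ℤ) ≤ (y' : ℤ) := by exact_mod_cast h.le
    apply Finset.sum_lt_sum
    · intro i _
      gcongr <;> positivity
    · refine ⟨k - 1, Finset.mem_range.2 (by omega), ?_⟩
      have hk1 : k - 1 - (k - 1) = 0 := by omega
      rw [hk1, pow_zero, pow_zero, mul_one, mul_one]
      have : (y : ℤ) + e < (y' : ℤ) + e := by
        have : (y : ℤ) < y' := by exact_mod_cast h
        linarith
      exact pow_lt_pow_left₀ this (by positivity) (by omega)
  have hfin : ((y : ℤ) + e) ^ k - (y : ℤ) ^ k < ((y' : ℤ) + e) ^ k - (y' : ℤ) ^ k := by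
    rw [key y, key y']
    have he' : (0 : ℤ) < e := by exact_mod_cast he
    exact mul_lt_mul_of_pos_left hsum he'
  zify
  push_cast
  linarith

lemma count_pow_diff {k d N : ℕ} (hk : 2 ≤ k) (hd : 1 ≤ d) :
    (((Finset.Icc 1 N) ×ˢ (Finset.Icc 1 N)).filter
      (fun p : ℕ × ℕ => p.1 ^ k = p.2 ^ k + d)).card ≤ d.divisors.card := by
  apply Finset.card_le_card_of_injOn (fun p => p.1 - p.2)
  · rintro ⟨x, y⟩ hp
    simp only [Finset.mem_coe, Finset.mem_filter, Finset.mem_product, Finset.mem_Icc] at hp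
    obtain ⟨⟨⟨hx1, _⟩, ⟨hy1, _⟩⟩, heq⟩ := hp
    have hyx : y < x := by
      by_contra hle
      push_neg at hle
      have := Nat.pow_le_pow_left hle k
      omega
    rw [Finset.mem_coe, Nat.mem_divisors]
    refine ⟨?_, by omega⟩
    have hdvd : x - y ∣ x ^ k - y ^ k := Nat.sub_dvd_pow_sub_pow _ _ k
    have hsub : x ^ k - y ^ k = d := by omega
    rwa [hsub] at hdvd
  · rintro ⟨x, y⟩ hp ⟨x', y'⟩ hq hpq
    simp only [Finset.coe_filter, Set.mem_setOf_eq, Finset.mem_product, Finset.mem_Icc] at hp hq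
    obtain ⟨⟨⟨hx1, _⟩, ⟨hy1, _⟩⟩, hpe⟩ := hp
    obtain ⟨⟨⟨hx1', _⟩, ⟨hy1', _⟩⟩, hqe⟩ := hq
    simp only at hpe hqe hpq
    have hyx : y < x := by
      by_contra hle; push_neg at hle
      have := Nat.pow_le_pow_left hle k; omega
    have hyx' : y' < x' := by
      by_contra hle; push_neg at hle
      have := Nat.pow_le_pow_left hle k; omega
    have he : 1 ≤ x - y := by omega
    have hyy : y = y' := by
      rcases Nat.lt_trichotomy y y' with hlt | heq | hgt
      · exfalso
        have hkey := pow_add_pow_lt hk he hlt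
        have e1 : y + (x - y) = x := by omega
        have e2 : y' + (x - y) = x' := by omega
        rw [e1, e2] at hkey
        omega
      · exact heq
      · exfalso
        have he' : 1 ≤ x' - y' := by omega
        have hkey := pow_add_pow_lt hk he' hgt
        have e1 : y' + (x' - y') = x' := by omega
        have e2 : y + (x' - y') = x := by omega
        rw [e1, e2] at hkey
        omega
    have hxx : x = x' := by omega
    simp [hxx, hyy]

lemma divisor_bound {δ : ℝ} (hδ : 0 < δ) :
    ∃ C : ℝ, 1 ≤ C ∧ ∀ d : ℕ, 1 ≤ d → ((d.divisors.card : ℝ)) ≤ C * (d : ℝ) ^ δ := by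
  have hlog2 : 0 < Real.log 2 := Real.log_pos (by norm_num)
  set B : ℝ := max 1 (1 / (δ * Real.log 2)) with hBdef
  have hB1 : (1 : ℝ) ≤ B := le_max_left _ _
  have hB0 : (0 : ℝ) ≤ B := by linarith
  have hBlog : 1 ≤ B * (δ * Real.log 2) := by
    have h1 : 1 / (δ * Real.log 2) ≤ B := le_max_right _ _
    have h2 : 0 < δ * Real.log 2 := by positivity
    rw [div_le_iff₀ h2] at h1
    linarith
  have key : ∀ a : ℕ, (a + 1 : ℝ) ≤ B * (2 : ℝ) ^ ((a : ℝ) * δ) := by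
    intro a
    have h2 : (2 : ℝ) ^ ((a : ℝ) * δ) = Real.exp ((a : ℝ) * δ * Real.log 2) := by
      rw [Real.rpow_def_of_pos (by norm_num : (0 : ℝ) < 2)]
      ring_nf
    rw [h2]
    have hexp : (a : ℝ) * δ * Real.log 2 + 1 ≤ Real.exp ((a : ℝ) * δ * Real.log 2) :=
      Real.add_one_le_exp _
    have ha : (0 : ℝ) ≤ a := Nat.cast_nonneg a
    nlinarith [mul_le_mul_of_nonneg_right hBlog ha,
      mul_le_mul_of_nonneg_left hexp hB0]
  set M : ℕ := Nat.floor ((2 : ℝ) ^ (1 / δ)) + 1 with hM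
  refine ⟨B ^ M, one_le_pow₀ hB1, ?_⟩
  intro d hd
  have hd0 : d ≠ 0 := by omega
  rw [Nat.card_divisors hd0]
  set s := d.primeFactors with hs
  set e : ℕ → ℕ := fun p => d.factorization p with he
  -- d as a product
  have hdprod : (d : ℝ) = ∏ p ∈ s, ((p : ℕ) : ℝ) ^ (e p) := by
    conv_lhs => rw [← Nat.factorization_prod_pow_eq_self hd0]
    rw [Finsupp.prod, Nat.support_factorization]
    push_cast
    rfl
  -- rpow of product
  have hrpow : (d : ℝ) ^ δ = ∏ p ∈ s, (((p : ℝ)) ^ (e p)) ^ δ := by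
    rw [hdprod, ← Real.finset_prod_rpow s _ (fun p _ => by positivity) δ]
  -- termwise bound
  have hterm : ∀ p ∈ s, ((e p + 1 : ℕ) : ℝ) ≤
      (if (p : ℝ) < (2 : ℝ) ^ (1 / δ) then B else 1) * (((p : ℝ)) ^ (e p)) ^ δ := by
    intro p hp
    have hp2 : 2 ≤ p := (Nat.prime_of_mem_primeFactors hp).two_le
    have hp2R : (2 : ℝ) ≤ (p : ℝ) := by exact_mod_cast hp2
    have hppos : (0 : ℝ) < p := by linarith
    have hpe : (((p : ℝ)) ^ (e p)) ^ δ = (p : ℝ) ^ ((e p : ℝ) * δ) := by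
      rw [← Real.rpow_natCast (p : ℝ) (e p), ← Real.rpow_mul hppos.le]
    rw [hpe]
    by_cases hsmall : (p : ℝ) < (2 : ℝ) ^ (1 / δ)
    · rw [if_pos hsmall]
      calc ((e p + 1 : ℕ) : ℝ) = ((e p : ℝ) + 1) := by push_cast; ring
        _ ≤ B * (2 : ℝ) ^ ((e p : ℝ) * δ) := key (e p)
        _ ≤ B * (p : ℝ) ^ ((e p : ℝ) * δ) :=
            mul_le_mul_of_nonneg_left
              (Real.rpow_le_rpow (by norm_num) hp2R (by positivity)) hB0
    · rw [if_neg hsmall, one_mul]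
      push_neg at hsmall
      have hp2δ : (2 : ℝ) ≤ (p : ℝ) ^ δ := by
        calc (2 : ℝ) = ((2 : ℝ) ^ (1 / δ)) ^ δ := by
              rw [← Real.rpow_mul (by norm_num), one_div, inv_mul_cancel₀ (ne_of_gt hδ),
                Real.rpow_one]
          _ ≤ (p : ℝ) ^ δ := Real.rpow_le_rpow (by positivity) hsmall hδ.le
      calc ((e p + 1 : ℕ) : ℝ) ≤ (2 : ℝ) ^ (e p) := by
            have h2e : e p + 1 ≤ 2 ^ (e p) := Nat.lt_two_pow_self (n := e p)
            exact_mod_cast h2e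
        _ ≤ ((p : ℝ) ^ δ) ^ (e p) := by
            apply pow_le_pow_left₀ (by norm_num) hp2δ
        _ = (p : ℝ) ^ ((e p : ℝ) * δ) := by
            rw [← Real.rpow_natCast ((p : ℝ) ^ δ) (e p), ← Real.rpow_mul hppos.le, mul_comm]
  -- combine
  have hcast : ((s.prod fun p => e p + 1 : ℕ) : ℝ) = ∏ p ∈ s, ((e p + 1 : ℕ) : ℝ) := by
    push_cast; rfl
  rw [hcast]
  calc ∏ p ∈ s, ((e p + 1 : ℕ) : ℝ)
      ≤ ∏ p ∈ s, ((if (p : ℝ) < (2 : ℝ) ^ (1 / δ) then B else 1) * (((p : ℝ)) ^ (e p)) ^ δ) :=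
        Finset.prod_le_prod (fun p _ => by positivity) hterm
    _ = (∏ p ∈ s, (if (p : ℝ) < (2 : ℝ) ^ (1 / δ) then B else 1)) *
        ∏ p ∈ s, (((p : ℝ)) ^ (e p)) ^ δ := Finset.prod_mul_distrib
    _ ≤ B ^ M * (d : ℝ) ^ δ := by
        rw [← hrpow]
        have hW : (∏ p ∈ s, (if (p : ℝ) < (2 : ℝ) ^ (1 / δ) then B else 1)) ≤ B ^ M := by
          have h1 : (∏ p ∈ s, (if (p : ℝ) < (2 : ℝ) ^ (1 / δ) then B else 1))
              = B ^ (s.filter (fun p : ℕ => (p : ℝ) < (2 : ℝ) ^ (1 / δ))).card := by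
            rw [Finset.prod_ite, Finset.prod_const_one, mul_one, Finset.prod_const]
          rw [h1]
          apply pow_le_pow_right₀ hB1
          have hsub : s.filter (fun p : ℕ => (p : ℝ) < (2 : ℝ) ^ (1 / δ)) ⊆ Finset.range M := by
            intro p hp
            simp only [Finset.mem_filter] at hp
            rw [Finset.mem_range, hM]
            have : p ≤ Nat.floor ((2 : ℝ) ^ (1 / δ)) := Nat.le_floor hp.2.le
            omega
          calc (s.filter _).card ≤ (Finset.range M).card := Finset.card_le_card hsub
            _ = M := Finset.card_range M
        exact mul_le_mul_of_nonneg_right hW (by positivity)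

lemma count_pow_le {k m N : ℕ} (hk : 1 ≤ k) :
    (((Finset.Icc 1 N).filter (fun x => x ^ k ≤ m)).card : ℝ) ≤ (m : ℝ) ^ ((k : ℝ)⁻¹) := by
  have hsub : (Finset.Icc 1 N).filter (fun x => x ^ k ≤ m)
      ⊆ Finset.Icc 1 (Nat.floor ((m : ℝ) ^ ((k : ℝ)⁻¹))) := by
    intro x hx
    simp only [Finset.mem_filter, Finset.mem_Icc] at hx ⊢
    refine ⟨hx.1.1, Nat.le_floor ?_⟩
    have hxk : ((x : ℝ)) ^ k ≤ (m : ℝ) := by exact_mod_cast hx.2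
    have hk0 : (k : ℝ) ≠ 0 := by positivity
    calc (x : ℝ) = (((x : ℝ)) ^ k) ^ ((k : ℝ)⁻¹) := by
          rw [← Real.rpow_natCast (x : ℝ) k, ← Real.rpow_mul (by positivity),
            mul_inv_cancel₀ hk0, Real.rpow_one]
      _ ≤ (m : ℝ) ^ ((k : ℝ)⁻¹) := Real.rpow_le_rpow (by positivity) hxk (by positivity)
  calc (((Finset.Icc 1 N).filter (fun x => x ^ k ≤ m)).card : ℝ)
      ≤ ((Finset.Icc 1 (Nat.floor ((m : ℝ) ^ ((k : ℝ)⁻¹)))).card : ℝ) := by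
        exact_mod_cast Finset.card_le_card hsub
    _ = (Nat.floor ((m : ℝ) ^ ((k : ℝ)⁻¹)) : ℝ) := by rw [Nat.card_Icc]; norm_num
    _ ≤ (m : ℝ) ^ ((k : ℝ)⁻¹) := Nat.floor_le (by positivity)

lemma ncard_eq (k₁ k₂ k₃ n : ℕ) (h₁ : 1 ≤ k₁) (h₂ : 1 ≤ k₂) (h₃ : 1 ≤ k₃) :
    {x : ℕ × ℕ × ℕ | 0 < x.1 ∧ 0 < x.2.1 ∧ 0 < x.2.2 ∧
        x.1 ^ k₁ + x.2.1 ^ k₂ + x.2.2 ^ k₃ = n}.ncard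
    = (((Icc 1 n) ×ˢ (Icc 1 n) ×ˢ (Icc 1 n)).filter
        (fun x : ℕ × ℕ × ℕ => x.1 ^ k₁ + x.2.1 ^ k₂ + x.2.2 ^ k₃ = n)).card := by
  rw [← Set.ncard_coe_finset]
  congr 1
  ext ⟨a, b, c⟩
  simp only [Set.mem_setOf_eq, Finset.coe_filter, Finset.mem_product, Finset.mem_Icc]
  constructor
  · rintro ⟨ha, hb, hc, he⟩
    have h1 : a ≤ a ^ k₁ := Nat.le_self_pow (by omega) a
    have h2 : b ≤ b ^ k₂ := Nat.le_self_pow (by omega) b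
    have h3 : c ≤ c ^ k₃ := Nat.le_self_pow (by omega) c
    exact ⟨⟨⟨ha, by omega⟩, ⟨hb, by omega⟩, ⟨hc, by omega⟩⟩, he⟩
  · rintro ⟨⟨⟨ha, _⟩, ⟨hb, _⟩, ⟨hc, _⟩⟩, he⟩
    exact ⟨ha, hb, hc, he⟩

set_option maxHeartbeats 1000000 in
lemma main_bound (k₁ k₂ k₃ : ℕ) (hk₁ : 2 ≤ k₁) (hk₂ : 2 ≤ k₂) (h12 : k₁ ≤ k₂) (hk₃ : 0 < k₃)
    {ε : ℝ} (hε : 0 < ε) :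
    ∃ C : ℝ, 0 < C ∧ ∀ n : ℕ, 1 ≤ n →
      ((((Icc 1 n) ×ˢ (Icc 1 n) ×ˢ (Icc 1 n)).filter
        (fun x : ℕ × ℕ × ℕ => x.1 ^ k₁ + x.2.1 ^ k₂ + x.2.2 ^ k₃ = n)).card : ℝ) ≤
        C * (n : ℝ) ^ ((1 / 2) * (1 / (k₁ : ℝ) + 1 / (k₂ : ℝ) + 1 / (k₃ : ℝ)) + ε) := by
  obtain ⟨C₁, hC₁, hτ⟩ := divisor_bound (δ := 2 * ε) (by positivity)
  refine ⟨Real.sqrt (1 + C₁), Real.sqrt_pos.mpr (by linarith), ?_⟩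
  intro n hn
  have hk₁1 : 1 ≤ k₁ := by omega
  have hk₂1 : 1 ≤ k₂ := by omega
  have hn0 : (0 : ℝ) < n := by exact_mod_cast hn
  have hn1 : (1 : ℝ) ≤ n := by exact_mod_cast hn
  set A := Finset.Icc 1 n with hA
  set r : ℕ → ℕ := fun m =>
    ((A ×ˢ A).filter (fun p : ℕ × ℕ => p.1 ^ k₁ + p.2 ^ k₂ = m)).card with hr
  set A₃ := A.filter (fun z => z ^ k₃ ≤ n) with hA3
  set T := ((A ×ˢ A ×ˢ A).filter
    (fun x : ℕ × ℕ × ℕ => x.1 ^ k₁ + x.2.1 ^ k₂ + x.2.2 ^ k₃ = n)) with hT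
  -- Step 1 : fiber decomposition over the third coordinate
  have h1 : T.card = ∑ z ∈ A₃, r (n - z ^ k₃) := by
    rw [Finset.card_eq_sum_card_fiberwise (f := fun x : ℕ × ℕ × ℕ => x.2.2) (t := A₃)
      (fun x hx => by
        simp only [hT, Finset.mem_coe, Finset.mem_filter, Finset.mem_product] at hx
        simp only [hA3, Finset.mem_coe, Finset.mem_filter]
        refine ⟨hx.1.2.2, ?_⟩
        have := hx.2
        omega)]
    apply Finset.sum_congr rfl
    intro z hz
    simp only [hA3, Finset.mem_filter, hA, Finset.mem_Icc] at hz
    obtain ⟨⟨hz1, hzn⟩, hzk⟩ := hz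
    apply Finset.card_nbij' (i := fun x : ℕ × ℕ × ℕ => (x.1, x.2.1))
      (j := fun p : ℕ × ℕ => (p.1, p.2, z))
    · rintro ⟨a, b, c⟩ hx
      simp only [Finset.mem_coe, Finset.mem_filter, hT, Finset.mem_product] at hx
      obtain ⟨⟨⟨ha, hb, hc⟩, he⟩, hcz⟩ := hx
      have hcz' : c = z := hcz
      subst hcz'
      simp only [Finset.mem_coe, Finset.mem_filter, Finset.mem_product]
      exact ⟨⟨ha, hb⟩, by omega⟩
    · rintro ⟨a, b⟩ hp
      simp only [Finset.mem_coe, Finset.mem_filter, Finset.mem_product] at hp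
      obtain ⟨⟨ha, hb⟩, he⟩ := hp
      simp only [Finset.mem_coe, Finset.mem_filter, hT, Finset.mem_product]
      refine ⟨⟨⟨ha, hb, ?_⟩, by omega⟩, trivial⟩
      simp only [hA, Finset.mem_Icc]
      omega
    · rintro ⟨a, b, c⟩ hx
      simp only [Finset.mem_coe, Finset.mem_filter] at hx
      have hcz' : c = z := hx.2
      subst hcz'
      rfl
    · rintro ⟨a, b⟩ _
      rfl
  -- Step 2 : Cauchy–Schwarz
  have h1R : (T.card : ℝ) = ∑ z ∈ A₃, ((r (n - z ^ k₃) : ℕ) : ℝ) := by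
    rw [h1]; push_cast; rfl
  have h2 : ((T.card : ℝ)) ^ 2 ≤ (A₃.card : ℝ) * ∑ z ∈ A₃, ((r (n - z ^ k₃) : ℝ)) ^ 2 := by
    rw [h1R]
    exact sq_sum_le_card_mul_sum_sq
  -- Step 3 : pass to sum over all m ≤ n
  have h3 : ∑ z ∈ A₃, ((r (n - z ^ k₃) : ℝ)) ^ 2
      ≤ ∑ m ∈ Finset.range (n + 1), ((r m : ℝ)) ^ 2 := by
    rw [← Finset.sum_image (f := fun m => ((r m : ℝ)) ^ 2)
      (g := fun z => n - z ^ k₃) ?inj]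
    case inj =>
      intro x hx y hy hxy
      simp only [hA3, Finset.mem_coe, Finset.mem_filter, hA, Finset.mem_Icc] at hx hy
      have hxy' : n - x ^ k₃ = n - y ^ k₃ := hxy
      have hxk : x ^ k₃ = y ^ k₃ := by omega
      exact Nat.pow_left_injective (by omega) hxk
    apply Finset.sum_le_sum_of_subset_of_nonneg
    · intro m hm
      simp only [Finset.mem_image] at hm
      obtain ⟨z, hz, hzm⟩ := hm
      rw [Finset.mem_range]
      omega
    · intro m _ _
      positivity
  -- Step 4 : sum of squares equals number of quadruples
  set W := (((A ×ˢ A) ×ˢ (A ×ˢ A)).filter (fun q : (ℕ × ℕ) × (ℕ × ℕ) =>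
    q.1.1 ^ k₁ + q.1.2 ^ k₂ = q.2.1 ^ k₁ + q.2.2 ^ k₂ ∧ q.1.1 ^ k₁ + q.1.2 ^ k₂ ≤ n)) with hWdef
  have h4 : W.card = ∑ m ∈ Finset.range (n + 1), (r m) * (r m) := by
    rw [Finset.card_eq_sum_card_fiberwise (f := fun q : (ℕ × ℕ) × (ℕ × ℕ) =>
        q.1.1 ^ k₁ + q.1.2 ^ k₂) (t := Finset.range (n + 1))
      (fun q hq => by
        simp only [hWdef, Finset.mem_coe, Finset.mem_filter] at hq
        rw [Finset.mem_coe, Finset.mem_range]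
        show q.1.1 ^ k₁ + q.1.2 ^ k₂ < n + 1
        omega)]
    apply Finset.sum_congr rfl
    intro m hm
    rw [Finset.mem_range] at hm
    have hfib : W.filter (fun q : (ℕ × ℕ) × (ℕ × ℕ) => q.1.1 ^ k₁ + q.1.2 ^ k₂ = m)
        = ((A ×ˢ A).filter (fun p : ℕ × ℕ => p.1 ^ k₁ + p.2 ^ k₂ = m)) ×ˢ
          ((A ×ˢ A).filter (fun p : ℕ × ℕ => p.1 ^ k₁ + p.2 ^ k₂ = m)) := by
      ext ⟨⟨a, b⟩, ⟨c, d⟩⟩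
      simp only [hWdef, Finset.mem_filter, Finset.mem_product]
      constructor
      · rintro ⟨⟨⟨hab, hcd⟩, heq, hle⟩, hm'⟩
        exact ⟨⟨hab, hm'⟩, ⟨hcd, by omega⟩⟩
      · rintro ⟨⟨hab, hm'⟩, ⟨hcd, hm''⟩⟩
        exact ⟨⟨⟨hab, hcd⟩, by omega, by omega⟩, hm'⟩
    rw [hfib, Finset.card_product]
  have h4R : ∑ m ∈ Finset.range (n + 1), ((r m : ℝ)) ^ 2 = (W.card : ℝ) := by
    rw [h4]
    push_cast
    exact Finset.sum_congr rfl (fun x _ => by ring)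
  -- Step 5 : diagonal/off-diagonal split
  set B₁ := A.filter (fun x => x ^ k₁ ≤ n) with hB₁
  set B₂ := A.filter (fun x => x ^ k₂ ≤ n) with hB₂
  have hsplit : (W.filter (fun q : (ℕ × ℕ) × (ℕ × ℕ) => q.1.2 = q.2.2)).card
      + (W.filter (fun q : (ℕ × ℕ) × (ℕ × ℕ) => ¬ q.1.2 = q.2.2)).card = W.card :=
    Finset.card_filter_add_card_filter_not _
  -- diagonal bound
  have hdiag : ((W.filter (fun q : (ℕ × ℕ) × (ℕ × ℕ) => q.1.2 = q.2.2)).card : ℝ)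
      ≤ (n : ℝ) ^ ((k₁ : ℝ)⁻¹) * (n : ℝ) ^ ((k₂ : ℝ)⁻¹) := by
    have hmemW : ∀ q ∈ W.filter (fun q : (ℕ × ℕ) × (ℕ × ℕ) => q.1.2 = q.2.2), q.2 = q.1 := by
      rintro ⟨⟨a, b⟩, ⟨c, d⟩⟩ hq
      simp only [hWdef, Finset.mem_filter, Finset.mem_product] at hq
      obtain ⟨⟨_, heq, _⟩, hbd⟩ := hq
      have hbd' : b = d := hbd
      subst hbd'

      have hac : a ^ k₁ = c ^ k₁ := by omega
      have : a = c := Nat.pow_left_injective (by omega) hac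
      simp [this]
    have hcard : (W.filter (fun q : (ℕ × ℕ) × (ℕ × ℕ) => q.1.2 = q.2.2)).card
        ≤ (B₁ ×ˢ B₂).card := by
      apply Finset.card_le_card_of_injOn (fun q => (q.1.1, q.1.2))
      · rintro ⟨⟨a, b⟩, ⟨c, d⟩⟩ hq
        simp only [hWdef, Finset.mem_coe, Finset.mem_filter, Finset.mem_product] at hq
        obtain ⟨⟨⟨⟨ha, hb⟩, _⟩, heq, hle⟩, hbd⟩ := hq
        simp only [Finset.mem_coe, Finset.mem_product, hB₁, hB₂, Finset.mem_filter]
        exact ⟨⟨ha, by omega⟩, ⟨hb, by omega⟩⟩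
      · rintro q hq q' hq' hqq
        have h2q := hmemW q hq
        have h2q' := hmemW q' hq'
        simp only [Prod.mk.injEq] at hqq
        have hfst : q.1 = q'.1 := Prod.ext hqq.1 hqq.2
        calc q = (q.1, q.2) := rfl
          _ = (q'.1, q'.2) := by rw [hfst, h2q, h2q', hfst]
          _ = q' := rfl
    calc ((W.filter (fun q : (ℕ × ℕ) × (ℕ × ℕ) => q.1.2 = q.2.2)).card : ℝ)
        ≤ ((B₁ ×ˢ B₂).card : ℝ) := by exact_mod_cast hcard
      _ = (B₁.card : ℝ) * (B₂.card : ℝ) := by rw [Finset.card_product]; push_cast; ring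
      _ ≤ (n : ℝ) ^ ((k₁ : ℝ)⁻¹) * (n : ℝ) ^ ((k₂ : ℝ)⁻¹) := by
          apply mul_le_mul (count_pow_le hk₁1) (count_pow_le hk₂1) (by positivity) (by positivity)
  -- off-diagonal bound
  have hoff : ((W.filter (fun q : (ℕ × ℕ) × (ℕ × ℕ) => ¬ q.1.2 = q.2.2)).card : ℝ)
      ≤ (n : ℝ) ^ ((k₂ : ℝ)⁻¹) * (n : ℝ) ^ ((k₂ : ℝ)⁻¹) * (C₁ * (n : ℝ) ^ (2 * ε)) := by
    set Wo := W.filter (fun q : (ℕ × ℕ) × (ℕ × ℕ) => ¬ q.1.2 = q.2.2) with hWo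
    have hfib : Wo.card = ∑ bc ∈ B₂ ×ˢ B₂,
        (Wo.filter (fun q : (ℕ × ℕ) × (ℕ × ℕ) => (q.1.2, q.2.2) = bc)).card := by
      apply Finset.card_eq_sum_card_fiberwise
      rintro ⟨⟨a, b⟩, ⟨c, d⟩⟩ hq
      simp only [hWo, hWdef, Finset.mem_coe, Finset.mem_filter, Finset.mem_product] at hq
      obtain ⟨⟨⟨⟨ha, hb⟩, ⟨hc, hd⟩⟩, heq, hle⟩, hbd⟩ := hq
      simp only [Finset.mem_coe, Finset.mem_product, hB₂, Finset.mem_filter]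
      exact ⟨⟨hb, by omega⟩, ⟨hd, by omega⟩⟩
    have hfib_bound : ∀ bc ∈ B₂ ×ˢ B₂,
        ((Wo.filter (fun q : (ℕ × ℕ) × (ℕ × ℕ) => (q.1.2, q.2.2) = bc)).card : ℝ)
        ≤ C₁ * (n : ℝ) ^ (2 * ε) := by
      rintro ⟨b, c⟩ hbc
      simp only [Finset.mem_product, hB₂, Finset.mem_filter, hA, Finset.mem_Icc] at hbc
      obtain ⟨⟨⟨hb1, hbn⟩, hbk⟩, ⟨⟨hc1, hcn⟩, hck⟩⟩ := hbc
      have hrpow_le : ∀ d : ℕ, 1 ≤ d → d ≤ n → (d.divisors.card : ℝ) ≤ C₁ * (n : ℝ) ^ (2 * ε) := by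
        intro d hd1 hdn
        calc (d.divisors.card : ℝ) ≤ C₁ * (d : ℝ) ^ (2 * ε) := hτ d hd1
          _ ≤ C₁ * (n : ℝ) ^ (2 * ε) := by
              apply mul_le_mul_of_nonneg_left _ (by linarith)
              apply Real.rpow_le_rpow (by positivity) (by exact_mod_cast hdn) (by positivity)
      rcases Nat.lt_trichotomy b c with hlt | heqbc | hgt
      · -- b < c
        set d := c ^ k₂ - b ^ k₂ with hd
        have hbc2 : b ^ k₂ < c ^ k₂ := Nat.pow_lt_pow_left hlt (by omega)
        have hd1 : 1 ≤ d := by omega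
        have hcard : (Wo.filter (fun q : (ℕ × ℕ) × (ℕ × ℕ) => (q.1.2, q.2.2) = (b, c))).card
            ≤ ((Finset.Icc 1 n ×ˢ Finset.Icc 1 n).filter
              (fun p : ℕ × ℕ => p.1 ^ k₁ = p.2 ^ k₁ + d)).card := by
          apply Finset.card_le_card_of_injOn (fun q => (q.1.1, q.2.1))
          · rintro ⟨⟨a, b'⟩, ⟨c', d'⟩⟩ hq
            simp only [Finset.mem_coe, Finset.mem_filter, hWo, hWdef, Finset.mem_product, Prod.mk.injEq] at hq
            obtain ⟨⟨⟨⟨⟨ha, hb'⟩, ⟨hc', hd'⟩⟩, heq, hle⟩, hne⟩, hb'', hd''⟩ := hq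
            subst hb''; subst hd''
            simp only [Finset.mem_coe, Finset.mem_filter, Finset.mem_product, hA] at *
            exact ⟨⟨ha, hc'⟩, by omega⟩
          · rintro ⟨⟨a, b'⟩, ⟨c', d'⟩⟩ hq ⟨⟨a2, b2⟩, ⟨c2, d2⟩⟩ hq2 he
            simp only [Finset.coe_filter, Set.mem_setOf_eq, Prod.mk.injEq] at hq hq2
            simp only [Prod.mk.injEq] at he
            obtain ⟨_, hb', hd'⟩ := hq
            obtain ⟨_, hb2, hd2⟩ := hq2
            simp [he.1, he.2, hb', hd', hb2, hd2]
        calc ((Wo.filter (fun q : (ℕ × ℕ) × (ℕ × ℕ) => (q.1.2, q.2.2) = (b, c))).card : ℝ)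
            ≤ (d.divisors.card : ℝ) := by
              exact_mod_cast le_trans hcard (count_pow_diff hk₁ hd1)
          _ ≤ C₁ * (n : ℝ) ^ (2 * ε) := hrpow_le d hd1 (by omega)
      · -- b = c : empty fiber
        have hempty : (Wo.filter (fun q : (ℕ × ℕ) × (ℕ × ℕ) => (q.1.2, q.2.2) = (b, c))).card = 0 := by
          rw [Finset.card_eq_zero]
          rw [Finset.eq_empty_iff_forall_notMem]
          rintro ⟨⟨a, b'⟩, ⟨c', d'⟩⟩ hq
          simp only [Finset.mem_filter, hWo, hWdef, Prod.mk.injEq] at hq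
          obtain ⟨⟨_, hne⟩, hb'', hd''⟩ := hq
          have hne' : ¬ b' = d' := hne
          omega
        simp only [hempty, Nat.cast_zero]
        positivity
      · -- c < b
        set d := b ^ k₂ - c ^ k₂ with hd
        have hbc2 : c ^ k₂ < b ^ k₂ := Nat.pow_lt_pow_left hgt (by omega)
        have hd1 : 1 ≤ d := by omega
        have hcard : (Wo.filter (fun q : (ℕ × ℕ) × (ℕ × ℕ) => (q.1.2, q.2.2) = (b, c))).card
            ≤ ((Finset.Icc 1 n ×ˢ Finset.Icc 1 n).filter
              (fun p : ℕ × ℕ => p.1 ^ k₁ = p.2 ^ k₁ + d)).card := by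
          apply Finset.card_le_card_of_injOn (fun q => (q.2.1, q.1.1))
          · rintro ⟨⟨a, b'⟩, ⟨c', d'⟩⟩ hq
            simp only [Finset.mem_coe, Finset.mem_filter, hWo, hWdef, Finset.mem_product, Prod.mk.injEq] at hq
            obtain ⟨⟨⟨⟨⟨ha, hb'⟩, ⟨hc', hd'⟩⟩, heq, hle⟩, hne⟩, hb'', hd''⟩ := hq
            subst hb''; subst hd''
            simp only [Finset.mem_coe, Finset.mem_filter, Finset.mem_product, hA] at *
            exact ⟨⟨hc', ha⟩, by omega⟩
          · rintro ⟨⟨a, b'⟩, ⟨c', d'⟩⟩ hq ⟨⟨a2, b2⟩, ⟨c2, d2⟩⟩ hq2 he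
            simp only [Finset.coe_filter, Set.mem_setOf_eq, Prod.mk.injEq] at hq hq2
            simp only [Prod.mk.injEq] at he
            obtain ⟨_, hb', hd'⟩ := hq
            obtain ⟨_, hb2, hd2⟩ := hq2
            simp [he.1, he.2, hb', hd', hb2, hd2]
        calc ((Wo.filter (fun q : (ℕ × ℕ) × (ℕ × ℕ) => (q.1.2, q.2.2) = (b, c))).card : ℝ)
            ≤ (d.divisors.card : ℝ) := by
              exact_mod_cast le_trans hcard (count_pow_diff hk₁ hd1)
          _ ≤ C₁ * (n : ℝ) ^ (2 * ε) := hrpow_le d hd1 (by omega)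
    have hB2card : (B₂.card : ℝ) ≤ (n : ℝ) ^ ((k₂ : ℝ)⁻¹) := count_pow_le hk₂1
    calc ((Wo.card : ℕ) : ℝ)
        = ∑ bc ∈ B₂ ×ˢ B₂,
          ((Wo.filter (fun q : (ℕ × ℕ) × (ℕ × ℕ) => (q.1.2, q.2.2) = bc)).card : ℝ) := by
          rw [hfib]; push_cast; rfl
      _ ≤ ∑ _bc ∈ B₂ ×ˢ B₂, C₁ * (n : ℝ) ^ (2 * ε) := Finset.sum_le_sum hfib_bound
      _ = ((B₂ ×ˢ B₂).card : ℝ) * (C₁ * (n : ℝ) ^ (2 * ε)) := by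
          rw [Finset.sum_const]; push_cast; ring
      _ ≤ (n : ℝ) ^ ((k₂ : ℝ)⁻¹) * (n : ℝ) ^ ((k₂ : ℝ)⁻¹) * (C₁ * (n : ℝ) ^ (2 * ε)) := by
          apply mul_le_mul_of_nonneg_right _ (by positivity)
          rw [Finset.card_product]
          push_cast
          exact mul_le_mul hB2card hB2card (by positivity) (by positivity)
  -- Step 6 : card of A₃
  have h6 : (A₃.card : ℝ) ≤ (n : ℝ) ^ ((k₃ : ℝ)⁻¹) := count_pow_le hk₃
  -- assemble
  have hWR : (W.card : ℝ) ≤ (n : ℝ) ^ ((k₁ : ℝ)⁻¹) * (n : ℝ) ^ ((k₂ : ℝ)⁻¹)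
      + (n : ℝ) ^ ((k₂ : ℝ)⁻¹) * (n : ℝ) ^ ((k₂ : ℝ)⁻¹) * (C₁ * (n : ℝ) ^ (2 * ε)) := by
    rw [← hsplit]
    push_cast
    exact add_le_add hdiag hoff
  have hmono : (n : ℝ) ^ ((k₂ : ℝ)⁻¹) ≤ (n : ℝ) ^ ((k₁ : ℝ)⁻¹) := by
    apply Real.rpow_le_rpow_of_exponent_le hn1
    have h1' : (0 : ℝ) < k₁ := by positivity
    have h2' : (0 : ℝ) < k₂ := by positivity
    rw [inv_le_inv₀ h2' h1']
    exact_mod_cast h12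
  have hone : (1 : ℝ) ≤ (n : ℝ) ^ (2 * ε) := Real.one_le_rpow hn1 (by positivity)
  set a := (n : ℝ) ^ ((k₁ : ℝ)⁻¹) with ha
  set b := (n : ℝ) ^ ((k₂ : ℝ)⁻¹) with hb
  set c := (n : ℝ) ^ ((k₃ : ℝ)⁻¹) with hc
  set u := (n : ℝ) ^ (2 * ε) with hu
  have hapos : 0 < a := by positivity
  have hbpos : 0 < b := by positivity
  have hcpos : 0 < c := by positivity
  have hupos : 0 < u := by positivity
  have hWR2 : (W.card : ℝ) ≤ (1 + C₁) * (a * b * u) := by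
    calc (W.card : ℝ) ≤ a * b + b * b * (C₁ * u) := hWR
      _ ≤ a * b * u + a * b * (C₁ * u) := by
          apply add_le_add
          · have hab : (0:ℝ) ≤ a * b := by positivity
            have h' := mul_le_mul_of_nonneg_left hone hab
            linarith
          · have hbb : b * b ≤ a * b := mul_le_mul_of_nonneg_right hmono hbpos.le
            have h'' := mul_le_mul_of_nonneg_right hbb (by positivity : (0:ℝ) ≤ C₁ * u)
            linarith
      _ = (1 + C₁) * (a * b * u) := by ring
  have hfinal2 : ((T.card : ℝ)) ^ 2 ≤ (1 + C₁) * (c * (a * b * u)) := by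
    calc ((T.card : ℝ)) ^ 2 ≤ (A₃.card : ℝ) * ∑ z ∈ A₃, ((r (n - z ^ k₃) : ℝ)) ^ 2 := h2
      _ ≤ (A₃.card : ℝ) * ∑ m ∈ Finset.range (n + 1), ((r m : ℝ)) ^ 2 := by
          apply mul_le_mul_of_nonneg_left h3 (by positivity)
      _ = (A₃.card : ℝ) * (W.card : ℝ) := by rw [h4R]
      _ ≤ c * ((1 + C₁) * (a * b * u)) := by
          apply mul_le_mul h6 hWR2 (by positivity) (by positivity)
      _ = (1 + C₁) * (c * (a * b * u)) := by ring
  -- take square roots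
  have hTnn : (0 : ℝ) ≤ (T.card : ℝ) := by positivity
  have habc : c * (a * b * u) = (n : ℝ) ^ ((k₁ : ℝ)⁻¹ + (k₂ : ℝ)⁻¹ + (k₃ : ℝ)⁻¹ + 2 * ε) := by
    rw [ha, hb, hc, hu, ← Real.rpow_add hn0, ← Real.rpow_add hn0, ← Real.rpow_add hn0]
    ring_nf
  have hsqrt : (T.card : ℝ) ≤ Real.sqrt ((1 + C₁) * (c * (a * b * u))) := by
    rw [← Real.sqrt_sq hTnn]
    exact Real.sqrt_le_sqrt hfinal2
  calc (T.card : ℝ) ≤ Real.sqrt ((1 + C₁) * (c * (a * b * u))) := hsqrt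
    _ = Real.sqrt (1 + C₁) * Real.sqrt (c * (a * b * u)) := Real.sqrt_mul (by linarith) _
    _ = Real.sqrt (1 + C₁) * (n : ℝ) ^ ((1 / 2) * (1 / (k₁ : ℝ) + 1 / (k₂ : ℝ) + 1 / (k₃ : ℝ)) + ε) := by
        congr 1
        rw [habc, Real.sqrt_eq_rpow, ← Real.rpow_mul hn0.le]
        congr 1
        field_simp

theorem stmt_14 (k₁ k₂ k₃ : ℕ) (hk₁ : 2 ≤ k₁) (hk₂ : 2 ≤ k₂) (hk₃ : 0 < k₃) :
    ∀ ε : ℝ, 0 < ε → ∃ C : ℝ, 0 < C ∧ ∀ n : ℕ, 1 ≤ n →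
      (({x : ℕ × ℕ × ℕ | 0 < x.1 ∧ 0 < x.2.1 ∧ 0 < x.2.2 ∧
            x.1 ^ k₁ + x.2.1 ^ k₂ + x.2.2 ^ k₃ = n}.ncard : ℝ)) ≤
        C * (n : ℝ) ^ ((1 / 2) * (1 / (k₁ : ℝ) + 1 / (k₂ : ℝ) + 1 / (k₃ : ℝ)) + ε) := by
  intro ε hε
  rcases le_total k₁ k₂ with h | h
  · obtain ⟨C, hC, hb⟩ := main_bound k₁ k₂ k₃ hk₁ hk₂ h hk₃ hε
    refine ⟨C, hC, fun n hn => ?_⟩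
    rw [ncard_eq k₁ k₂ k₃ n (by omega) (by omega) hk₃]
    exact hb n hn
  · obtain ⟨C, hC, hb⟩ := main_bound k₂ k₁ k₃ hk₂ hk₁ h hk₃ hε
    refine ⟨C, hC, fun n hn => ?_⟩
    have hswap : {x : ℕ × ℕ × ℕ | 0 < x.1 ∧ 0 < x.2.1 ∧ 0 < x.2.2 ∧
        x.1 ^ k₁ + x.2.1 ^ k₂ + x.2.2 ^ k₃ = n}
        = (fun x : ℕ × ℕ × ℕ => (x.2.1, x.1, x.2.2)) '' {x : ℕ × ℕ × ℕ | 0 < x.1 ∧ 0 < x.2.1 ∧ 0 < x.2.2 ∧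
        x.1 ^ k₂ + x.2.1 ^ k₁ + x.2.2 ^ k₃ = n} := by
      ext ⟨a, b, c⟩
      simp only [Set.mem_setOf_eq, Set.mem_image, Prod.mk.injEq, Prod.exists]
      constructor
      · rintro ⟨ha, hb', hc, he⟩
        exact ⟨b, a, c, ⟨hb', ha, hc, by omega⟩, rfl, rfl, rfl⟩
      · rintro ⟨p, q, w, ⟨hp, hq, hw, he⟩, h1, h2, h3⟩
        subst h1; subst h2; subst h3
        exact ⟨hq, hp, hw, by omega⟩
    have hinj : Function.Injective (fun x : ℕ × ℕ × ℕ => (x.2.1, x.1, x.2.2)) := by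
      rintro ⟨a, b, c⟩ ⟨a', b', c'⟩ hx
      simp only [Prod.mk.injEq] at hx
      obtain ⟨h1, h2, h3⟩ := hx
      simp [h1, h2, h3]
    rw [hswap, Set.ncard_image_of_injective _ hinj, ncard_eq k₂ k₁ k₃ n (by omega) (by omega) hk₃]
    have hexp : (1 / 2 : ℝ) * (1 / (k₂ : ℝ) + 1 / (k₁ : ℝ) + 1 / (k₃ : ℝ)) + ε
        = (1 / 2) * (1 / (k₁ : ℝ) + 1 / (k₂ : ℝ) + 1 / (k₃ : ℝ)) + ε := by ring
    rw [← hexp]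
    exact hb n hn
end

section
/- Let k ≥ 2 be an integer. For n ≥ 1 let R⁺(n) denote the number of triples of positive integers (x_1, x_2, x_3) with x_1^k + x_2^k + x_3^k = n. Then for every ε > 0 there exists a constant C > 0 such that for all n ≥ 1, R⁺(n) ≤ C · n^{ 3/(2k) + ε }. -/
open Finset


lemma prime_factor_bound {ε : ℝ} (hε : 0 < ε) (B : ℝ) (hB : B = 1 + 1/(ε * Real.log 2))
    (P0 : ℕ) (hP0 : P0 = ⌈(2:ℝ) ^ (1/ε)⌉₊) {p : ℕ} (hp : p.Prime) (a : ℕ) :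
    ((a:ℝ) + 1) ≤ (if p < P0 then B else 1) * (p:ℝ) ^ ((a:ℝ) * ε) := by
  have hc : 0 < ε * Real.log 2 := by positivity
  have hp2 : (2:ℝ) ≤ (p:ℝ) := by exact_mod_cast hp.two_le
  have hppos : (0:ℝ) ≤ (p:ℝ) := by linarith
  by_cases h : p < P0
  · simp only [h, if_true]
    have h1 : (1:ℝ) + (a:ℝ) * (ε * Real.log 2) ≤ (2:ℝ) ^ ((a:ℝ) * ε) := by
      rw [Real.rpow_def_of_pos (by norm_num)]
      have := Real.add_one_le_exp ((a:ℝ) * ε * Real.log 2)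
      calc (1:ℝ) + (a:ℝ) * (ε * Real.log 2) = ((a:ℝ) * ε * Real.log 2) + 1 := by ring
        _ ≤ Real.exp ((a:ℝ) * ε * Real.log 2) := this
        _ = Real.exp (Real.log 2 * ((a:ℝ) * ε)) := by ring_nf
    have h2 : (2:ℝ) ^ ((a:ℝ) * ε) ≤ (p:ℝ) ^ ((a:ℝ) * ε) :=
      Real.rpow_le_rpow (by norm_num) hp2 (by positivity)
    have hB1 : B * (1 + (a:ℝ) * (ε * Real.log 2)) ≥ (a:ℝ) + 1 := by
      rw [hB]
      have ha : (0:ℝ) ≤ (a:ℝ) := Nat.cast_nonneg a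
      have h3 : 0 < (ε * Real.log 2) := hc
      rw [div_eq_mul_inv]
      have h4 : (ε * Real.log 2) * (ε * Real.log 2)⁻¹ = 1 := mul_inv_cancel₀ (ne_of_gt h3)
      nlinarith [mul_nonneg ha h3.le, inv_nonneg.2 h3.le]
    have hBpos : 0 < B := by rw [hB]; positivity
    calc ((a:ℝ) + 1) ≤ B * (1 + (a:ℝ) * (ε * Real.log 2)) := hB1
      _ ≤ B * (2:ℝ) ^ ((a:ℝ) * ε) := by nlinarith
      _ ≤ B * (p:ℝ) ^ ((a:ℝ) * ε) := by nlinarith [Real.rpow_nonneg (show (0:ℝ) ≤ 2 by norm_num) ((a:ℝ)*ε)]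
  · simp only [h, if_false, one_mul]
    push_neg at h
    have hge : (2:ℝ) ^ (1/ε) ≤ (p:ℝ) := le_trans (Nat.le_ceil _) (by exact_mod_cast (hP0 ▸ h))
    have h2 : (2:ℝ) ≤ (p:ℝ) ^ ε := by
      have h3 : ((2:ℝ) ^ (1/ε)) ^ ε ≤ (p:ℝ) ^ ε :=
        Real.rpow_le_rpow (Real.rpow_nonneg (by norm_num) _) hge hε.le
      rwa [← Real.rpow_mul (by norm_num : (0:ℝ) ≤ 2), one_div,
        inv_mul_cancel₀ (ne_of_gt hε), Real.rpow_one] at h3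
    have key : (p:ℝ) ^ ((a:ℝ) * ε) = ((p:ℝ) ^ ε) ^ a := by
      rw [← Real.rpow_natCast ((p:ℝ)^ε) a, ← Real.rpow_mul hppos]
      ring_nf
    rw [key]
    have h4 : (2:ℝ) ^ a ≤ ((p:ℝ) ^ ε) ^ a := pow_le_pow_left₀ (by norm_num) h2 a
    have h5 : ((a:ℝ) + 1) ≤ (2:ℝ) ^ a := by
      have := Nat.lt_two_pow_self (n := a)
      have : (a:ℝ) + 1 ≤ ((2^a : ℕ) : ℝ) := by exact_mod_cast this
      simpa using this
    linarith

lemma divisor_bound_s15 {ε : ℝ} (hε : 0 < ε) :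
    ∃ C : ℝ, 1 ≤ C ∧ ∀ h : ℕ, h ≠ 0 → ((h.divisors.card : ℝ)) ≤ C * (h:ℝ) ^ ε := by
  set B : ℝ := 1 + 1/(ε * Real.log 2) with hB
  set P0 : ℕ := ⌈(2:ℝ) ^ (1/ε)⌉₊ with hP0
  have hB1 : 1 ≤ B := by
    have h0 : 0 < ε * Real.log 2 := by positivity
    have := le_of_lt (div_pos one_pos h0)
    simp only [hB]; linarith
  refine ⟨B ^ P0, one_le_pow₀ hB1, ?_⟩
  intro h hh
  rw [Nat.card_divisors hh]
  have hfact : (h : ℝ) = ∏ p ∈ h.primeFactors, (p:ℝ) ^ (h.factorization p) := by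
    conv_lhs => rw [← Nat.factorization_prod_pow_eq_self hh]
    rw [Nat.prod_factorization_eq_prod_primeFactors]
    push_cast
    rfl
  have hrpow : (h:ℝ) ^ ε = ∏ p ∈ h.primeFactors, (p:ℝ) ^ ((h.factorization p : ℝ) * ε) := by
    rw [hfact, ← Real.finset_prod_rpow _ _ (fun p _ => by positivity) ε]
    refine Finset.prod_congr rfl (fun p hp => ?_)
    rw [← Real.rpow_natCast (p:ℝ) (h.factorization p), ← Real.rpow_mul (Nat.cast_nonneg p)]
  rw [hrpow]
  push_cast
  calc ∏ p ∈ h.primeFactors, ((h.factorization p : ℝ) + 1)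
      ≤ ∏ p ∈ h.primeFactors,
        ((if p < P0 then B else 1) * (p:ℝ) ^ ((h.factorization p : ℝ) * ε)) := by
        refine Finset.prod_le_prod (fun p _ => by positivity) (fun p hp => ?_)
        exact prime_factor_bound hε B hB P0 hP0 (Nat.prime_of_mem_primeFactors hp) _
    _ = (∏ p ∈ h.primeFactors, (if p < P0 then B else 1)) *
        ∏ p ∈ h.primeFactors, (p:ℝ) ^ ((h.factorization p : ℝ) * ε) := by
        rw [Finset.prod_mul_distrib]
    _ ≤ B ^ P0 * ∏ p ∈ h.primeFactors, (p:ℝ) ^ ((h.factorization p : ℝ) * ε) := by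
        have hprodB : (∏ p ∈ h.primeFactors, (if p < P0 then B else 1)) ≤ B ^ P0 := by
          rw [Finset.prod_ite, Finset.prod_const, Finset.prod_const, one_pow, mul_one]
          have hsub : (h.primeFactors.filter (fun p => p < P0)) ⊆ Finset.range P0 :=
            fun p hp => Finset.mem_range.2 (Finset.mem_filter.1 hp).2
          apply pow_le_pow_right₀ hB1
          simpa using Finset.card_le_card hsub
        have hnn : (0:ℝ) ≤ ∏ p ∈ h.primeFactors, (p:ℝ) ^ ((h.factorization p : ℝ) * ε) :=
          Finset.prod_nonneg (fun p _ => by positivity)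
        exact mul_le_mul_of_nonneg_right hprodB hnn


-- strict convexity-type lemma: x < y → (x+1)^k + y^k < x^k + (y+1)^k for k ≥ 2
lemma lemM {k : ℕ} (hk : 2 ≤ k) {x y : ℕ} (hxy : x < y) :
    (x+1)^k + y^k < x^k + (y+1)^k := by
  have expand : ∀ z : ℕ, (z+1)^k = ∑ i ∈ Finset.range k, z^i * k.choose i + z^k := by
    intro z
    rw [add_pow]
    rw [Finset.sum_range_succ]
    simp
  rw [expand x, expand y]
  have hsum : ∑ i ∈ Finset.range k, x^i * k.choose i < ∑ i ∈ Finset.range k, y^i * k.choose i := by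
    apply Finset.sum_lt_sum
    · intro i _
      exact Nat.mul_le_mul_right _ (Nat.pow_le_pow_left hxy.le i)
    · refine ⟨1, Finset.mem_range.2 (by omega), ?_⟩
      simp only [pow_one]
      have : 0 < k.choose 1 := by simp [Nat.choose_one_right]; omega
      exact Nat.mul_lt_mul_of_lt_of_le hxy (le_refl _) this
  omega

-- strict: b < b', e ≥ 1 : (b+e)^k + b'^k < (b'+e)^k + b^k
lemma lemM2 {k : ℕ} (hk : 2 ≤ k) {b b' e : ℕ} (hb : b < b') (he : 1 ≤ e) :
    (b+e)^k + b'^k < (b'+e)^k + b^k := by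
  induction e with
  | zero => omega
  | succ e ih =>
    rcases Nat.eq_zero_or_pos e with rfl | hepos
    · have h0 := lemM hk hb
      simp only [Nat.zero_add]
      omega
    · have h1 := ih hepos
      have h2 := lemM hk (show b + e < b' + e by omega)
      have e1 : b + (e+1) = (b+e) + 1 := by ring
      have e2 : b' + (e+1) = (b'+e) + 1 := by ring
      rw [e1, e2]
      omega

-- at most d(h) pairs (b,d) with d^k = b^k + h, b ≥ 1
lemma pairs_card_le {k : ℕ} (hk : 2 ≤ k) {h : ℕ} (hh : h ≠ 0) (N : ℕ) :
    ((Finset.Icc 1 N ×ˢ Finset.Icc 1 N).filter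
      (fun p : ℕ × ℕ => p.2 ^ k = p.1 ^ k + h)).card ≤ h.divisors.card := by
  apply Finset.card_le_card_of_injOn (fun p => p.2 - p.1)
  · intro p hp
    simp only [Finset.mem_coe, Finset.mem_filter, Finset.mem_product, Finset.mem_Icc] at hp ⊢
    obtain ⟨⟨⟨hb1, _⟩, _⟩, heq⟩ := hp
    have hlt : p.1 < p.2 := by
      by_contra hle
      push_neg at hle
      have := Nat.pow_le_pow_left hle k
      omega
    rw [Nat.mem_divisors]
    refine ⟨?_, hh⟩
    have hdvd : p.2 - p.1 ∣ p.2 ^ k - p.1 ^ k := Nat.sub_dvd_pow_sub_pow _ _ _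
    have : p.2 ^ k - p.1 ^ k = h := by omega
    rwa [this] at hdvd
  · intro p hp q hq hpq
    simp only [Finset.mem_coe, Finset.mem_filter, Finset.mem_product, Finset.mem_Icc] at hp hq
    obtain ⟨⟨⟨hb1, _⟩, _⟩, heqp⟩ := hp
    obtain ⟨⟨⟨hb1q, _⟩, _⟩, heqq⟩ := hq
    have hltp : p.1 < p.2 := by
      by_contra hle; push_neg at hle; have := Nat.pow_le_pow_left hle k; omega
    have hltq : q.1 < q.2 := by
      by_contra hle; push_neg at hle; have := Nat.pow_le_pow_left hle k; omega
    set e := p.2 - p.1 with he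
    have hep : p.2 = p.1 + e := by omega
    have heq2 : q.2 = q.1 + e := by simp only [he] at hpq ⊢; omega
    have he1 : 1 ≤ e := by omega
    have : p.1 = q.1 := by
      by_contra hne
      rcases Nat.lt_or_ge p.1 q.1 with hlt | hge
      · have := lemM2 hk hlt he1
        rw [hep] at heqp; rw [heq2] at heqq
        omega
      · have hlt2 : q.1 < p.1 := by omega
        have := lemM2 hk hlt2 he1
        rw [hep] at heqp; rw [heq2] at heqq
        omega
    have : p.2 = q.2 := by omega
    exact Prod.ext ‹p.1 = q.1› this

lemma pairs_card_le' {k : ℕ} (hk : 2 ≤ k) {h : ℕ} (hh : h ≠ 0) (N : ℕ) :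
    ((Finset.Icc 1 N ×ˢ Finset.Icc 1 N).filter
      (fun p : ℕ × ℕ => p.1 ^ k = p.2 ^ k + h)).card ≤ h.divisors.card := by
  refine le_trans (Finset.card_le_card_of_injOn Prod.swap ?_ ?_) (pairs_card_le hk hh N)
  · intro p hp
    simp only [Finset.mem_coe, Finset.mem_filter, Finset.mem_product] at hp ⊢
    exact ⟨⟨hp.1.2, hp.1.1⟩, hp.2⟩
  · intro p _ q _ hpq
    exact Prod.swap_injective hpq

theorem stmt_15 (k : ℕ) (hk : 2 ≤ k) :
    ∀ ε : ℝ, 0 < ε → ∃ C : ℝ, 0 < C ∧ ∀ n : ℕ, 1 ≤ n →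
      (({x : ℕ × ℕ × ℕ | 0 < x.1 ∧ 0 < x.2.1 ∧ 0 < x.2.2 ∧
            x.1 ^ k + x.2.1 ^ k + x.2.2 ^ k = n}.ncard : ℝ)) ≤
        C * (n : ℝ) ^ (3 / (2 * (k : ℝ)) + ε) := by
  intro ε hε
  obtain ⟨C, hC1, hCd⟩ := divisor_bound_s15 (show (0:ℝ) < 2*ε by linarith)
  refine ⟨Real.sqrt (1+C), Real.sqrt_pos.2 (by linarith), ?_⟩
  intro n hn
  have hkR : (0:ℝ) < (k:ℝ) := by exact_mod_cast (by omega : 0 < k)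
  have hnR : (1:ℝ) ≤ (n:ℝ) := by exact_mod_cast hn
  set N : ℕ := ⌊(n:ℝ) ^ ((k:ℝ)⁻¹)⌋₊ with hNdef
  have hNle : (N:ℝ) ≤ (n:ℝ) ^ ((k:ℝ)⁻¹) := Nat.floor_le (by positivity)
  have hroot : ∀ x : ℕ, x ^ k ≤ n → x ≤ N := by
    intro x hxk
    apply Nat.le_floor
    have h1 : ((x:ℝ)) ^ (k:ℕ) ≤ (n:ℝ) := by exact_mod_cast hxk
    have h2 : (((x:ℝ)) ^ (k:ℕ)) ^ ((k:ℝ)⁻¹) = (x:ℝ) := by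
      rw [← Real.rpow_natCast (x:ℝ) k, ← Real.rpow_mul (Nat.cast_nonneg x),
        mul_inv_cancel₀ (ne_of_gt hkR), Real.rpow_one]
    rw [← h2]
    exact Real.rpow_le_rpow (by positivity) h1 (by positivity)
  have hpow_le : ∀ a : ℕ, a ≤ N → a ^ k ≤ n := by
    intro a ha
    have h1 : (a:ℝ) ≤ (n:ℝ) ^ ((k:ℝ)⁻¹) := le_trans (by exact_mod_cast ha) hNle
    have h2 : ((n:ℝ) ^ ((k:ℝ)⁻¹)) ^ (k:ℕ) = (n:ℝ) := by
      rw [← Real.rpow_natCast _ k, ← Real.rpow_mul (by positivity),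
        inv_mul_cancel₀ (ne_of_gt hkR), Real.rpow_one]
    have h3 : ((a:ℝ)) ^ (k:ℕ) ≤ (n:ℝ) := by
      rw [← h2]; exact pow_le_pow_left₀ (by positivity) h1 k
    exact_mod_cast h3
  set I : Finset ℕ := Finset.Icc 1 N with hIdef
  have hIcard : I.card = N := by simp [hIdef]
  set P : Finset (ℕ × ℕ) := I ×ˢ I with hPdef
  set S : Finset (ℕ × ℕ × ℕ) :=
    (I ×ˢ (I ×ˢ I)).filter (fun x : ℕ×ℕ×ℕ => x.1^k + x.2.1^k + x.2.2^k = n) with hSdef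
  have hset : {x : ℕ × ℕ × ℕ | 0 < x.1 ∧ 0 < x.2.1 ∧ 0 < x.2.2 ∧
      x.1 ^ k + x.2.1 ^ k + x.2.2 ^ k = n} = ↑S := by
    ext x
    simp only [Set.mem_setOf_eq, hSdef, Finset.coe_filter, Finset.mem_product,
      Finset.mem_coe, hIdef, Finset.mem_Icc, Set.mem_setOf_eq]
    constructor
    · rintro ⟨h1, h2, h3, h4⟩
      refine ⟨⟨⟨h1, hroot _ (by omega)⟩, ⟨h2, hroot _ (by omega)⟩, ⟨h3, hroot _ (by omega)⟩⟩, h4⟩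
    · rintro ⟨⟨⟨a1,_⟩,⟨b1,_⟩,⟨c1,_⟩⟩, h4⟩
      exact ⟨a1, b1, c1, h4⟩
  rw [hset, Set.ncard_coe_finset]
  -- fibers over first coordinate
  set F : ℕ → Finset (ℕ × ℕ) :=
    fun c => P.filter (fun p : ℕ×ℕ => c^k + p.1^k + p.2^k = n) with hFdef
  have hScard : S.card = ∑ c ∈ I, (F c).card := by
    rw [Finset.card_eq_sum_card_fiberwise
      (f := fun x : ℕ×ℕ×ℕ => x.1) (t := I)
      (fun x hx => (Finset.mem_product.1 (Finset.mem_filter.1 hx).1).1)]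
    refine Finset.sum_congr rfl (fun c hc => ?_)
    apply Finset.card_nbij' (fun x => x.2) (fun p => (c, p))
    · intro x hx
      simp only [Finset.mem_coe, Finset.mem_filter, Finset.mem_product, hSdef, hFdef, hPdef] at hx ⊢
      obtain ⟨⟨⟨_, hbc⟩, heq⟩, hfst⟩ := hx
      subst hfst
      exact ⟨hbc, by omega⟩
    · intro p hp
      simp only [Finset.mem_coe, hFdef, Finset.mem_filter, hPdef, Finset.mem_product] at hp
      simp only [Finset.mem_coe, Finset.mem_filter, Finset.mem_product]
      exact ⟨⟨⟨hc, hp.1.1, hp.1.2⟩, by omega⟩, trivial⟩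
    · intro x hx
      simp only [Finset.mem_coe, Finset.mem_filter] at hx
      exact Prod.ext hx.2.symm rfl
    · intro p hp
      rfl
  -- Cauchy-Schwarz
  have hCS : ((S.card : ℝ))^2 ≤ (N:ℝ) * ∑ c ∈ I, ((F c).card : ℝ)^2 := by
    rw [hScard]
    push_cast
    have := sq_sum_le_card_mul_sum_sq (s := I) (f := fun c => ((F c).card : ℝ))
    rwa [hIcard] at this
  -- energy set
  set Q : Finset ((ℕ×ℕ)×(ℕ×ℕ)) :=
    (P ×ˢ P).filter (fun z => z.1.1^k + z.1.2^k = z.2.1^k + z.2.2^k) with hQdef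
  have hsum_sq : ∑ c ∈ I, ((F c).card)^2 ≤ Q.card := by
    have h1 : ∑ c ∈ I, ((F c).card)^2 = (I.sigma (fun c => (F c) ×ˢ (F c))).card := by
      rw [Finset.card_sigma]
      refine Finset.sum_congr rfl (fun c _ => ?_)
      rw [Finset.card_product, sq]
    rw [h1]
    apply Finset.card_le_card_of_injOn (fun z => z.2)
    · intro z hz
      simp only [Finset.mem_coe, Finset.mem_sigma, Finset.mem_product] at hz
      obtain ⟨hc, hp, hq⟩ := hz
      simp only [hFdef, Finset.mem_filter] at hp hq
      simp only [Finset.mem_coe, hQdef, Finset.mem_filter, Finset.mem_product]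
      exact ⟨⟨hp.1, hq.1⟩, by omega⟩
    · intro z hz w hw hzw
      simp only [Finset.mem_coe, Finset.mem_sigma, Finset.mem_product] at hz hw
      obtain ⟨hc, hp, hq⟩ := hz
      obtain ⟨hc', hp', hq'⟩ := hw
      simp only [hFdef, Finset.mem_filter] at hp hp'
      have h2 : z.2 = w.2 := hzw
      have h3 : z.1 ^ k = w.1 ^ k := by
        have := hp.2
        have := hp'.2
        rw [h2] at *
        omega
      have h4 : z.1 = w.1 := Nat.pow_left_injective (by omega) h3
      exact Sigma.ext h4 (heq_of_eq h2)
  -- bound on energy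
  have hQbound : (Q.card : ℝ) ≤ (N:ℝ)^2 * (1 + C * (n:ℝ)^(2*ε)) := by
    have hfib : Q.card = ∑ w ∈ P, (Q.filter (fun z => (z.1.1, z.2.1) = w)).card := by
      apply Finset.card_eq_sum_card_fiberwise
      intro z hz
      simp only [Finset.mem_coe, hQdef, Finset.mem_filter, hPdef, Finset.mem_product] at hz
      simp only [Finset.mem_coe, hPdef, Finset.mem_product]
      exact ⟨hz.1.1.1, hz.1.2.1⟩
    -- fiber injects into G w
    have hfibG : ∀ w : ℕ × ℕ, (Q.filter (fun z => (z.1.1, z.2.1) = w)).card ≤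
        (P.filter (fun p : ℕ×ℕ => w.1^k + p.1^k = w.2^k + p.2^k)).card := by
      intro w
      apply Finset.card_le_card_of_injOn (fun z => (z.1.2, z.2.2))
      · intro z hz
        simp only [Finset.mem_coe, Finset.mem_filter, hQdef, hPdef, Finset.mem_product] at hz ⊢
        obtain ⟨⟨⟨h1, h2⟩, heq⟩, hw⟩ := hz
        have hw1 : z.1.1 = w.1 := (Prod.ext_iff.1 hw).1
        have hw2 : z.2.1 = w.2 := (Prod.ext_iff.1 hw).2
        exact ⟨⟨h1.2, h2.2⟩, by rw [← hw1, ← hw2]; omega⟩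
      · intro z hz y hy hzy
        simp only [Finset.mem_coe, Finset.mem_filter] at hz hy
        have hz1 : (z.1.1, z.2.1) = w := hz.2
        have hy1 : (y.1.1, y.2.1) = w := hy.2
        have az1 : z.1.1 = w.1 := (Prod.ext_iff.1 hz1).1
        have az2 : z.2.1 = w.2 := (Prod.ext_iff.1 hz1).2
        have ay1 : y.1.1 = w.1 := (Prod.ext_iff.1 hy1).1
        have ay2 : y.2.1 = w.2 := (Prod.ext_iff.1 hy1).2
        have e1 : z.1.1 = y.1.1 := by rw [az1, ay1]
        have e2 : z.2.1 = y.2.1 := by rw [az2, ay2]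
        have hzy' : (z.1.2, z.2.2) = (y.1.2, y.2.2) := hzy
        have e3 : z.1.2 = y.1.2 := (Prod.ext_iff.1 hzy').1
        have e4 : z.2.2 = y.2.2 := (Prod.ext_iff.1 hzy').2
        exact Prod.ext (Prod.ext e1 e3) (Prod.ext e2 e4)
    -- bound each G w
    have hG : ∀ w ∈ P, ((P.filter (fun p : ℕ×ℕ => w.1^k + p.1^k = w.2^k + p.2^k)).card : ℝ) ≤
        (if w.1 = w.2 then (N:ℝ) else 0) + C * (n:ℝ)^(2*ε) := by
      intro w hw
      simp only [hPdef, Finset.mem_product, hIdef, Finset.mem_Icc] at hw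
      have hCn : (0:ℝ) ≤ C * (n:ℝ)^(2*ε) := by positivity
      rcases lt_trichotomy w.1 w.2 with hlt | heqw | hgt
      · -- h = w.2^k - w.1^k
        set h : ℕ := w.2^k - w.1^k with hh
        have hpow : w.1^k < w.2^k := Nat.pow_lt_pow_left hlt (by omega)
        have hh0 : h ≠ 0 := by omega
        have hfil : (P.filter (fun p : ℕ×ℕ => w.1^k + p.1^k = w.2^k + p.2^k)) =
            (P.filter (fun p : ℕ×ℕ => p.1^k = p.2^k + h)) := by
          apply Finset.filter_congr
          intro p _
          constructor <;> intro hp' <;> omega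
        rw [hfil]
        have hd := pairs_card_le' hk hh0 N
        have hdC := hCd h hh0
        have hhn : h ≤ n := le_trans (by omega) (hpow_le w.2 hw.2.2)
        have hrle : (h:ℝ)^(2*ε) ≤ (n:ℝ)^(2*ε) :=
          Real.rpow_le_rpow (Nat.cast_nonneg h) (by exact_mod_cast hhn) (by linarith)
        have : ((P.filter (fun p : ℕ×ℕ => p.1^k = p.2^k + h)).card : ℝ) ≤ C * (n:ℝ)^(2*ε) := by
          calc ((P.filter (fun p : ℕ×ℕ => p.1^k = p.2^k + h)).card : ℝ)
              ≤ (h.divisors.card : ℝ) := by exact_mod_cast hd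
            _ ≤ C * (h:ℝ)^(2*ε) := hdC
            _ ≤ C * (n:ℝ)^(2*ε) := by nlinarith
        rw [if_neg (by omega)]
        linarith
      · -- diagonal
        rw [if_pos heqw]
        have hsub : ((P.filter (fun p : ℕ×ℕ => w.1^k + p.1^k = w.2^k + p.2^k)).card : ℝ) ≤ (N:ℝ) := by
          have : (P.filter (fun p : ℕ×ℕ => w.1^k + p.1^k = w.2^k + p.2^k)).card ≤ I.card := by
            apply Finset.card_le_card_of_injOn (fun p => p.1)
            · intro p hp
              simp only [Finset.mem_coe, Finset.mem_filter, hPdef, Finset.mem_product] at hp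
              exact hp.1.1
            · intro p hp q hq hpq
              simp only [Finset.mem_coe, Finset.mem_filter] at hp hq
              have hp2 : p.1^k = p.2^k := by rw [heqw] at hp; omega
              have hq2 : q.1^k = q.2^k := by rw [heqw] at hq; omega
              have hpe : p.1 = p.2 := Nat.pow_left_injective (by omega) hp2
              have hqe : q.1 = q.2 := Nat.pow_left_injective (by omega) hq2
              have hpq' : p.1 = q.1 := hpq
              exact Prod.ext hpq' (by rw [← hpe, ← hqe, hpq'])
          rw [hIcard] at this
          exact_mod_cast this
        linarith
      · set h : ℕ := w.1^k - w.2^k with hh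
        have hpow : w.2^k < w.1^k := Nat.pow_lt_pow_left hgt (by omega)
        have hh0 : h ≠ 0 := by omega
        have hfil : (P.filter (fun p : ℕ×ℕ => w.1^k + p.1^k = w.2^k + p.2^k)) =
            (P.filter (fun p : ℕ×ℕ => p.2^k = p.1^k + h)) := by
          apply Finset.filter_congr
          intro p _
          constructor <;> intro hp' <;> omega
        rw [hfil]
        have hd := pairs_card_le hk hh0 N
        have hdC := hCd h hh0
        have hhn : h ≤ n := le_trans (by omega) (hpow_le w.1 hw.1.2)
        have hrle : (h:ℝ)^(2*ε) ≤ (n:ℝ)^(2*ε) :=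
          Real.rpow_le_rpow (Nat.cast_nonneg h) (by exact_mod_cast hhn) (by linarith)
        have : ((P.filter (fun p : ℕ×ℕ => p.2^k = p.1^k + h)).card : ℝ) ≤ C * (n:ℝ)^(2*ε) := by
          calc ((P.filter (fun p : ℕ×ℕ => p.2^k = p.1^k + h)).card : ℝ)
              ≤ (h.divisors.card : ℝ) := by exact_mod_cast hd
            _ ≤ C * (h:ℝ)^(2*ε) := hdC
            _ ≤ C * (n:ℝ)^(2*ε) := by nlinarith
        rw [if_neg (by omega)]
        linarith
    -- sum up
    calc (Q.card : ℝ) = ∑ w ∈ P, ((Q.filter (fun z => (z.1.1, z.2.1) = w)).card : ℝ) := by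
          rw [hfib]; push_cast; rfl
      _ ≤ ∑ w ∈ P, ((if w.1 = w.2 then (N:ℝ) else 0) + C * (n:ℝ)^(2*ε)) := by
          apply Finset.sum_le_sum
          intro w hw
          calc ((Q.filter (fun z => (z.1.1, z.2.1) = w)).card : ℝ)
              ≤ ((P.filter (fun p : ℕ×ℕ => w.1^k + p.1^k = w.2^k + p.2^k)).card : ℝ) := by
                exact_mod_cast hfibG w
            _ ≤ _ := hG w hw
      _ = (∑ w ∈ P, (if w.1 = w.2 then (N:ℝ) else 0)) + (P.card : ℝ) * (C * (n:ℝ)^(2*ε)) := by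
          rw [Finset.sum_add_distrib, Finset.sum_const, nsmul_eq_mul]
      _ ≤ (N:ℝ) * (N:ℝ) + (N:ℝ)^2 * (C * (n:ℝ)^(2*ε)) := by
          have h1 : ∑ w ∈ P, (if w.1 = w.2 then (N:ℝ) else 0) ≤ (N:ℝ) * (N:ℝ) := by
            rw [hPdef, Finset.sum_product]
            have hin : ∀ a ∈ I, (∑ c ∈ I, if (a, c).1 = (a, c).2 then (N:ℝ) else 0) ≤ (N:ℝ) := by
              intro a _
              simp only
              rw [Finset.sum_ite_eq I a (fun _ => (N:ℝ))]
              split <;> simp [Nat.cast_nonneg]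
            calc ∑ a ∈ I, (∑ c ∈ I, if (a, c).1 = (a, c).2 then (N:ℝ) else 0)
                ≤ ∑ a ∈ I, (N:ℝ) := Finset.sum_le_sum hin
              _ = (N:ℝ) * (N:ℝ) := by rw [Finset.sum_const, hIcard, nsmul_eq_mul]
          have h2 : (P.card : ℝ) = (N:ℝ)^2 := by
            rw [hPdef, Finset.card_product, hIcard]; push_cast; ring
          rw [h2]
          linarith
      _ = (N:ℝ)^2 * (1 + C * (n:ℝ)^(2*ε)) := by ring
  -- final chaining
  have hnpos : (0:ℝ) < (n:ℝ) := by linarith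
  have hQr : ((S.card : ℝ))^2 ≤ (N:ℝ)^3 * (1 + C * (n:ℝ)^(2*ε)) := by
    have h1 : (∑ c ∈ I, ((F c).card : ℝ)^2) ≤ (Q.card : ℝ) := by exact_mod_cast hsum_sq
    have hNnn : (0:ℝ) ≤ (N:ℝ) := Nat.cast_nonneg N
    calc ((S.card:ℝ))^2 ≤ (N:ℝ) * ∑ c ∈ I, ((F c).card : ℝ)^2 := hCS
      _ ≤ (N:ℝ) * (Q.card : ℝ) := mul_le_mul_of_nonneg_left h1 hNnn
      _ ≤ (N:ℝ) * ((N:ℝ)^2 * (1 + C * (n:ℝ)^(2*ε))) := mul_le_mul_of_nonneg_left hQbound hNnn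
      _ = (N:ℝ)^3 * (1 + C * (n:ℝ)^(2*ε)) := by ring
  have hone : (1:ℝ) ≤ (n:ℝ)^(2*ε) := by
    rw [show (1:ℝ) = (n:ℝ)^(0:ℝ) from (Real.rpow_zero _).symm]
    exact Real.rpow_le_rpow_of_exponent_le hnR (by linarith)
  have hN3 : ((N:ℝ))^3 ≤ (n:ℝ)^(3/(k:ℝ)) := by
    calc ((N:ℝ))^3 ≤ ((n:ℝ)^((k:ℝ)⁻¹))^(3:ℕ) := pow_le_pow_left₀ (Nat.cast_nonneg N) hNle 3
      _ = (n:ℝ)^(3/(k:ℝ)) := by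
          rw [← Real.rpow_natCast ((n:ℝ)^((k:ℝ)⁻¹)) 3, ← Real.rpow_mul (le_of_lt hnpos)]
          congr 1
          push_cast
          field_simp
  have key : ((S.card:ℝ))^2 ≤ (Real.sqrt (1+C) * (n:ℝ)^(3/(2*(k:ℝ))+ε))^2 := by
    have hrhs : (Real.sqrt (1+C) * (n:ℝ)^(3/(2*(k:ℝ))+ε))^2
        = (1+C) * (n:ℝ)^(3/(k:ℝ) + 2*ε) := by
      rw [mul_pow, Real.sq_sqrt (by linarith : (0:ℝ) ≤ 1+C)]
      congr 1
      rw [← Real.rpow_natCast ((n:ℝ)^(3/(2*(k:ℝ))+ε)) 2, ← Real.rpow_mul (le_of_lt hnpos)]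
      congr 1
      have : (k:ℝ) ≠ 0 := ne_of_gt hkR
      push_cast
      field_simp
    rw [hrhs]
    have hfac : 1 + C * (n:ℝ)^(2*ε) ≤ (1+C) * (n:ℝ)^(2*ε) := by nlinarith
    have hNnn3 : (0:ℝ) ≤ ((N:ℝ))^3 := by positivity
    calc ((S.card:ℝ))^2 ≤ (N:ℝ)^3 * (1 + C * (n:ℝ)^(2*ε)) := hQr
      _ ≤ (N:ℝ)^3 * ((1+C) * (n:ℝ)^(2*ε)) := mul_le_mul_of_nonneg_left hfac hNnn3
      _ ≤ (n:ℝ)^(3/(k:ℝ)) * ((1+C) * (n:ℝ)^(2*ε)) :=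
          mul_le_mul_of_nonneg_right hN3 (by positivity)
      _ = (1+C) * ((n:ℝ)^(3/(k:ℝ)) * (n:ℝ)^(2*ε)) := by ring
      _ = (1+C) * (n:ℝ)^(3/(k:ℝ) + 2*ε) := by rw [← Real.rpow_add hnpos]
  have hfin := Real.sqrt_le_sqrt key
  rw [Real.sqrt_sq (Nat.cast_nonneg S.card), Real.sqrt_sq (by positivity)] at hfin
  exact hfin
end

section
/- Let s ≥ 2 and let a_1, …, a_s be positive integers with gcd(a_1, …, a_s) = 1. For n ≥ 1 let R⁺(n) denote the number of s-tuples of positive integers (x_1, …, x_s) with a_1x_1 + … + a_sx_s = n. Then R⁺(n) is asymptotic to n^{s−1} / ( (s−1)! · a_1 a_2 ⋯ a_s ) as n → ∞; that is, lim_{n→∞} R⁺(n) · (s−1)! · a_1 ⋯ a_s / n^{s−1} = 1. -/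
open Finset

lemma bezout_finset {ι : Type*} [DecidableEq ι] (t : Finset ι) (f : ι → ℕ) :
    ∃ g : ι → ℤ, ∑ i ∈ t, g i * (f i : ℤ) = ((t.gcd f : ℕ) : ℤ) := by
  induction t using Finset.induction_on with
  | empty => exact ⟨0, by simp⟩
  | @insert j t hj ih =>
    obtain ⟨g, hg⟩ := ih
    set d := t.gcd f with hd
    refine ⟨fun i => if i = j then Nat.gcdA (f j) d else Nat.gcdB (f j) d * g i, ?_⟩
    rw [Finset.sum_insert hj, Finset.gcd_insert]
    simp only [if_pos rfl]
    have h1 : ∑ i ∈ t, (if i = j then (Nat.gcdA (f j) d : ℤ) else Nat.gcdB (f j) d * g i) * (f i : ℤ)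
        = Nat.gcdB (f j) d * ∑ i ∈ t, g i * (f i : ℤ) := by
      rw [Finset.mul_sum]
      refine Finset.sum_congr rfl fun i hi => ?_
      rw [if_neg (by rintro rfl; exact hj hi)]; ring
    rw [h1, hg]
    have h2 : (GCDMonoid.gcd (f j) d : ℕ) = Nat.gcd (f j) d := rfl
    rw [h2, Nat.gcd_eq_gcd_ab (f j) d]
    push_cast; ring

section RepSec
variable {s : ℕ} (a : Fin s → ℕ)

def NRep (c : ℕ) : Prop := ∃ y : Fin s → ℕ, ∑ i, a i * y i = c

lemma NRep.add {c d : ℕ} (hc : NRep a c) (hd : NRep a d) : NRep a (c + d) := by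
  obtain ⟨y, hy⟩ := hc; obtain ⟨z, hz⟩ := hd
  exact ⟨y + z, by simp [Pi.add_apply, mul_add, Finset.sum_add_distrib, hy, hz]⟩

lemma NRep.nsmul {c : ℕ} (k : ℕ) (hc : NRep a c) : NRep a (k * c) := by
  induction k with
  | zero => exact ⟨0, by simp⟩
  | succ n ih => rw [Nat.succ_mul]; exact (NRep.add a ih hc)

lemma rep_exists_bound (hgcd : Finset.univ.gcd a = 1) :
    ∃ B : ℕ, ∀ c : ℕ, B ≤ c → NRep a c := by
  obtain ⟨g, hg⟩ := bezout_finset Finset.univ a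
  rw [hgcd] at hg
  set p : Fin s → ℕ := fun i => (g i).toNat with hp
  set q : Fin s → ℕ := fun i => (-(g i)).toNat with hq
  set u : ℕ := ∑ i, a i * q i with hu
  set v : ℕ := ∑ i, a i * p i with hv
  have hpq : ∀ i : Fin s, (p i : ℤ) - (q i : ℤ) = g i := by
    intro i; simp only [hp, hq]; omega
  have huv : v = u + 1 := by
    have h3 : (v : ℤ) - (u : ℤ) = 1 := by
      rw [hv, hu]
      push_cast
      rw [← Finset.sum_sub_distrib]
      rw [show (1:ℤ) = ((1:ℕ):ℤ) from rfl, ← hg]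
      refine Finset.sum_congr rfl fun i _ => ?_
      rw [← hpq i]; ring
    omega
  have hru : NRep a u := ⟨q, hu.symm⟩
  have hrv : NRep a v := ⟨p, hv.symm⟩
  refine ⟨u * u, fun c hc => ?_⟩
  rcases Nat.eq_zero_or_pos u with h0 | hpos
  · have h1 : NRep a 1 := by rw [h0] at huv; rwa [huv] at hrv
    have := NRep.nsmul a c h1
    rwa [Nat.mul_one] at this
  · have h1 : c % u < u := Nat.mod_lt _ hpos
    have h2 : c % u ≤ c / u := by
      have h4 : u ≤ c / u := (Nat.le_div_iff_mul_le hpos).2 (by nlinarith)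
      omega
    have hdm : c = (c / u - c % u) * u + (c % u) * (u + 1) := by
      have h3 := Nat.div_add_mod c u
      have h5 : (c / u - c % u) * u = c / u * u - c % u * u := Nat.sub_mul _ _ _
      have h6 : c % u * u ≤ c / u * u := Nat.mul_le_mul_right u h2
      have h7 : c % u * (u + 1) = c % u * u + c % u := Nat.mul_succ _ _
      have h8 : u * (c / u) = c / u * u := Nat.mul_comm _ _
      generalize c / u * u = X at *
      generalize c % u * u = Y at *
      omega
    rw [hdm, ← huv]
    exact NRep.add a (NRep.nsmul a _ hru) (NRep.nsmul a _ hrv)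
end RepSec
open Finset

section Count
variable {s : ℕ} (a : Fin s → ℕ)

def boxF (s n : ℕ) : Finset (Fin s → ℕ) := Fintype.piFinset fun _ => Finset.range (n+1)

lemma mem_boxF {s n : ℕ} {x : Fin s → ℕ} : x ∈ boxF s n ↔ ∀ i, x i ≤ n := by
  simp [boxF, Nat.lt_succ_iff]

def solsF (n : ℕ) : Finset (Fin s → ℕ) := (boxF s n).filter (fun x => ∑ i, a i * x i = n)
def lessF (n : ℕ) : Finset (Fin s → ℕ) := (boxF s n).filter (fun x => ∑ i, a i * x i ≤ n)
def simF (s n : ℕ) : Finset (Fin s → ℕ) := (boxF s n).filter (fun z => ∑ i, z i ≤ n)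

variable (ha : ∀ i, 0 < a i)
include ha

lemma coord_le_sum (x : Fin s → ℕ) (i : Fin s) : x i ≤ ∑ j, a j * x j :=
  le_trans (Nat.le_mul_of_pos_left (x i) (ha i))
    (Finset.single_le_sum (f := fun j => a j * x j) (fun j _ => Nat.zero_le _)
      (Finset.mem_univ i))

omit ha

lemma mem_simF {s n : ℕ} {z : Fin s → ℕ} : z ∈ simF s n ↔ ∑ i, z i ≤ n := by
  constructor
  · intro h; exact (Finset.mem_filter.1 h).2
  · intro h
    refine Finset.mem_filter.2 ⟨mem_boxF.2 fun i => ?_, h⟩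
    exact le_trans (Finset.single_le_sum (fun j _ => Nat.zero_le _) (Finset.mem_univ i)) h

include ha

lemma mem_solsF {n : ℕ} {x : Fin s → ℕ} : x ∈ solsF a n ↔ ∑ i, a i * x i = n := by
  constructor
  · intro h; exact (Finset.mem_filter.1 h).2
  · intro h
    exact Finset.mem_filter.2 ⟨mem_boxF.2 fun i => h ▸ coord_le_sum a ha x i, h⟩

lemma mem_lessF {n : ℕ} {x : Fin s → ℕ} : x ∈ lessF a n ↔ ∑ i, a i * x i ≤ n := by
  constructor
  · intro h; exact (Finset.mem_filter.1 h).2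
  · intro h
    exact Finset.mem_filter.2 ⟨mem_boxF.2 fun i => le_trans (coord_le_sum a ha x i) h, h⟩

lemma lessF_card_eq_sum (M : ℕ) :
    (lessF a M).card = ∑ m ∈ Finset.range (M+1), (solsF a m).card := by
  rw [Finset.card_eq_sum_card_fiberwise
    (s := lessF a M) (f := fun x => ∑ i, a i * x i) (t := Finset.range (M+1))
    (fun x hx => Finset.mem_range.2 (Nat.lt_succ_of_le ((mem_lessF a ha).1 hx)))]
  refine Finset.sum_congr rfl fun m hm => ?_
  congr 1
  ext x
  simp only [Finset.mem_filter]
  constructor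
  · rintro ⟨-, h⟩; exact (mem_solsF a ha).2 h
  · intro h
    have h2 := (mem_solsF a ha).1 h
    exact ⟨(mem_lessF a ha).2 (h2 ▸ Nat.lt_succ_iff.1 (Finset.mem_range.1 hm)), h2⟩

lemma lessF_mul_le (n : ℕ) :
    (lessF a n).card * ∏ i, a i ≤ (simF s (n + ∑ i, (a i - 1))).card := by
  classical
  set A' := ∑ i, (a i - 1) with hA'
  have hcard : (lessF a n).card * ∏ i, a i
      = ((lessF a n) ×ˢ Fintype.piFinset fun i => Finset.range (a i)).card := by
    rw [Finset.card_product, Fintype.card_piFinset]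
    simp
  rw [hcard]
  apply Finset.card_le_card_of_injOn (fun p => fun i => a i * p.1 i + p.2 i)
  · rintro ⟨x, r⟩ hp
    rw [Finset.mem_coe, Finset.mem_product] at hp
    obtain ⟨hx, hr⟩ := hp
    simp only [Fintype.mem_piFinset, Finset.mem_range] at hr
    refine mem_simF.2 ?_
    rw [Finset.sum_add_distrib]
    refine Nat.add_le_add ((mem_lessF a ha).1 hx) (Finset.sum_le_sum fun i _ => ?_)
    have h3 := hr i
    show r i <= a i - 1
    omega
  · rintro ⟨x, r⟩ hp ⟨x', r'⟩ hp' h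
    rw [Finset.mem_coe, Finset.mem_product] at hp hp'
    have hr := hp.2; have hr' := hp'.2
    simp only [Fintype.mem_piFinset, Finset.mem_range] at hr hr'
    have key : ∀ i, a i * x i + r i = a i * x' i + r' i := fun i => congrFun h i
    have hxx : x = x' := by
      funext i
      have h1 := key i
      have := hr i; have := hr' i
      have hai := ha i
      rcases Nat.lt_trichotomy (x i) (x' i) with hlt | heq | hgt
      · nlinarith [Nat.mul_le_mul_left (a i) (Nat.succ_le_of_lt hlt)]
      · exact heq
      · nlinarith [Nat.mul_le_mul_left (a i) (Nat.succ_le_of_lt hgt)]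
    have hrr : r = r' := by
      funext i
      have h1 := key i
      rw [hxx] at h1
      omega
    simp [hxx, hrr]

lemma simF_le_lessF_mul (n : ℕ) :
    (simF s n).card ≤ (lessF a n).card * ∏ i, a i := by
  classical
  have hcard : (lessF a n).card * ∏ i, a i
      = ((lessF a n) ×ˢ Fintype.piFinset fun i => Finset.range (a i)).card := by
    rw [Finset.card_product, Fintype.card_piFinset]
    simp
  rw [hcard]
  apply Finset.card_le_card_of_injOn (fun z => (fun i => z i / a i, fun i => z i % a i))
  · intro z hz
    rw [Finset.mem_coe, Finset.mem_product]
    constructor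
    · refine (mem_lessF a ha).2 (le_trans (Finset.sum_le_sum fun i _ => ?_) (mem_simF.1 hz))
      rw [Nat.mul_comm]
      exact Nat.div_mul_le_self _ _
    · simp only [Fintype.mem_piFinset, Finset.mem_range]
      exact fun i => Nat.mod_lt _ (ha i)
  · intro z hz z' hz' h
    have h1 : ∀ i, z i / a i = z' i / a i := fun i => congrFun (congrArg Prod.fst h) i
    have h2 : ∀ i, z i % a i = z' i % a i := fun i => congrFun (congrArg Prod.snd h) i
    funext i
    calc z i = a i * (z i / a i) + z i % a i := (Nat.div_add_mod _ _).symm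
      _ = a i * (z' i / a i) + z' i % a i := by rw [h1 i, h2 i]
      _ = z' i := Nat.div_add_mod _ _

end Count
open Finset

def boxF' (s n : ℕ) : Finset (Fin s → ℕ) := Fintype.piFinset fun _ => Finset.range (n+1)
def simF' (s n : ℕ) : Finset (Fin s → ℕ) := (boxF' s n).filter (fun z => ∑ i, z i ≤ n)
def eqF (k m : ℕ) : Finset (Fin k → ℕ) := (boxF' k m).filter (fun z => ∑ i, z i = m)

lemma mem_eqF {k m : ℕ} {z : Fin k → ℕ} : z ∈ eqF k m ↔ ∑ i, z i = m := by
  constructor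
  · intro h; exact (Finset.mem_filter.1 h).2
  · intro h
    refine Finset.mem_filter.2 ⟨?_, h⟩
    simp only [boxF', Fintype.mem_piFinset, Finset.mem_range, Nat.lt_succ_iff]
    intro i
    exact h ▸ Finset.single_le_sum (f := fun j => z j) (fun j _ => Nat.zero_le _) (Finset.mem_univ i)

lemma count_sum_univ {k : ℕ} (μ : Multiset (Fin k)) : ∑ i, μ.count i = Multiset.card μ := by
  classical
  rw [← Multiset.toFinset_sum_count_eq μ]
  exact (Finset.sum_subset (Finset.subset_univ _) (fun x _ hx =>
    Multiset.count_eq_zero_of_notMem (by simpa using hx))).symm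

lemma count_rebuild {k : ℕ} (z : Fin k → ℕ) (j : Fin k) :
    Multiset.count j (∑ i, z i • ({i} : Multiset (Fin k))) = z j := by
  classical
  rw [Multiset.count_sum']
  simp [Multiset.count_singleton]

lemma multiset_card_finset_sum {ι β : Type*} [DecidableEq ι] (t : Finset ι) (f : ι → Multiset β) :
    Multiset.card (∑ i ∈ t, f i) = ∑ i ∈ t, Multiset.card (f i) := by
  induction t using Finset.induction_on with
  | empty => simp
  | @insert j t hj ih => rw [Finset.sum_insert hj, Finset.sum_insert hj, Multiset.card_add, ih]

lemma eqF_card (k m : ℕ) : (eqF k m).card = Fintype.card (Sym (Fin k) m) := by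
  classical
  rw [← Fintype.card_coe (eqF k m)]
  refine Fintype.card_congr ?_
  refine
    { toFun := fun z => ⟨∑ i, (z.1 i) • ({i} : Multiset (Fin k)), ?_⟩
      invFun := fun μ => ⟨fun i => μ.1.count i, ?_⟩
      left_inv := ?_
      right_inv := ?_ }
  · rw [multiset_card_finset_sum]
    simpa using mem_eqF.1 z.2
  · refine mem_eqF.2 ?_
    rw [count_sum_univ]
    exact μ.2
  · rintro ⟨z, hz⟩
    ext i
    simp [count_rebuild]
  · rintro ⟨μ, hμ⟩
    refine Subtype.ext ?_
    dsimp only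
    ext j
    rw [count_rebuild]

lemma simF'_card (s n : ℕ) : (simF' s n).card = (n + s).choose s := by
  classical
  have h1 : (simF' s n).card = (eqF (s+1) n).card := by
    refine Finset.card_bij (fun z _ => Fin.cons (n - ∑ i, z i) z) ?_ ?_ ?_
    · intro z hz
      have hle : ∑ i, z i ≤ n := (Finset.mem_filter.1 hz).2
      refine mem_eqF.2 ?_
      rw [Fin.sum_cons]
      omega
    · intro z hz z' hz' h
      have := congrArg Fin.tail h
      simpa [Fin.tail_cons] using this
    · intro w hw
      refine ⟨Fin.tail w, ?_, ?_⟩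
      · have hsum := mem_eqF.1 hw
        rw [Fin.sum_univ_succ] at hsum
        refine Finset.mem_filter.2 ⟨?_, ?_⟩
        · simp only [boxF', Fintype.mem_piFinset, Finset.mem_range, Nat.lt_succ_iff]
          intro i
          have : w (Fin.succ i) ≤ ∑ j, w (Fin.succ j) :=
            Finset.single_le_sum (f := fun j : Fin s => w (Fin.succ j)) (fun j _ => Nat.zero_le _)
              (Finset.mem_univ i)
          simp only [Fin.tail]
          omega
        · show ∑ i, Fin.tail w i ≤ n
          simp only [Fin.tail]
          omega
      · have hsum := mem_eqF.1 hw
        rw [Fin.sum_univ_succ] at hsum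
        have htail : ∑ i, Fin.tail w i = ∑ j : Fin s, w (Fin.succ j) := rfl
        funext i
        show Fin.cons (n - ∑ i, Fin.tail w i) (Fin.tail w) i = w i
        refine Fin.cases ?_ ?_ i
        · rw [Fin.cons_zero, htail]
          omega
        · intro j
          rw [Fin.cons_succ]
          rfl
  rw [h1, eqF_card]
  rw [Sym.card_sym_eq_choose]
  simp only [Fintype.card_fin]
  have h2 : s + 1 + n - 1 = s + n := by omega
  rw [h2]
  have h3 := Nat.choose_symm (Nat.le_add_right s n)
  have h4 : s + n - s = n := by omega
  rw [h4] at h3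
  rw [h3, Nat.add_comm]
open Finset

-- real power-difference bounds
lemma pow_sub_pow_le_upper {x y : ℝ} (p : ℕ) (hx : 0 ≤ x) (hxy : x ≤ y) :
    y ^ (p+1) - x ^ (p+1) ≤ (p+1) * (y - x) * y ^ p := by
  have hy : 0 ≤ y := le_trans hx hxy
  rw [← geom_sum₂_mul y x (p+1)]
  have hsum : (∑ i ∈ Finset.range (p+1), y ^ i * x ^ (p + 1 - 1 - i)) ≤ (p+1) * y ^ p := by
    calc (∑ i ∈ Finset.range (p+1), y ^ i * x ^ (p + 1 - 1 - i))
        ≤ ∑ i ∈ Finset.range (p+1), y ^ p := by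
          refine Finset.sum_le_sum fun i hi => ?_
          have hi' : i < p + 1 := Finset.mem_range.1 hi
          calc y ^ i * x ^ (p + 1 - 1 - i) ≤ y ^ i * y ^ (p + 1 - 1 - i) :=
                mul_le_mul_of_nonneg_left (pow_le_pow_left₀ hx hxy _) (pow_nonneg hy i)
            _ = y ^ p := by rw [← pow_add]; congr 1; omega
      _ = (p+1) * y ^ p := by rw [Finset.sum_const, Finset.card_range]; simp
  have h2 := mul_le_mul_of_nonneg_right hsum (sub_nonneg.2 hxy)
  calc (∑ i ∈ Finset.range (p+1), y ^ i * x ^ (p + 1 - 1 - i)) * (y - x)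
      ≤ ((p+1) * y ^ p) * (y - x) := h2
    _ = (p+1) * (y - x) * y ^ p := by ring

lemma pow_sub_pow_ge_lower {x y : ℝ} (p : ℕ) (hx : 0 ≤ x) (hxy : x ≤ y) :
    (p+1) * (y - x) * x ^ p ≤ y ^ (p+1) - x ^ (p+1) := by
  have hy : 0 ≤ y := le_trans hx hxy
  rw [← geom_sum₂_mul y x (p+1)]
  have hsum : ((p+1) : ℝ) * x ^ p ≤ ∑ i ∈ Finset.range (p+1), y ^ i * x ^ (p + 1 - 1 - i) := by
    calc ((p+1) : ℝ) * x ^ p = ∑ _i ∈ Finset.range (p+1), x ^ p := by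
          rw [Finset.sum_const, Finset.card_range]; simp
      _ ≤ ∑ i ∈ Finset.range (p+1), y ^ i * x ^ (p + 1 - 1 - i) := by
          refine Finset.sum_le_sum fun i hi => ?_
          have hi' : i < p + 1 := Finset.mem_range.1 hi
          calc x ^ p = x ^ i * x ^ (p + 1 - 1 - i) := by rw [← pow_add]; congr 1; omega
            _ ≤ y ^ i * x ^ (p + 1 - 1 - i) :=
                mul_le_mul_of_nonneg_right (pow_le_pow_left₀ hx hxy _) (pow_nonneg hx _)
  have h2 := mul_le_mul_of_nonneg_right hsum (sub_nonneg.2 hxy)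
  calc ((p+1):ℝ) * (y - x) * x ^ p = ((p+1) * x ^ p) * (y - x) := by ring
    _ ≤ (∑ i ∈ Finset.range (p+1), y ^ i * x ^ (p + 1 - 1 - i)) * (y - x) := h2

lemma ratio_pow_tendsto (C : ℝ) (p : ℕ) :
    Filter.Tendsto (fun ν : ℕ => (((ν:ℝ) + C)/ν) ^ p) Filter.atTop (nhds 1) := by
  have h1 : Filter.Tendsto (fun ν : ℕ => ((ν:ℝ) + C)/ν) Filter.atTop (nhds 1) := by
    have h2 : (fun ν : ℕ => ((ν:ℝ) + C)/ν) =ᶠ[Filter.atTop] (fun ν : ℕ => 1 + C/ν) := by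
      filter_upwards [Filter.eventually_gt_atTop 0] with ν hν
      have : (ν:ℝ) ≠ 0 := by positivity
      field_simp
    rw [Filter.tendsto_congr' h2]
    have h3 := (tendsto_const_div_atTop_nhds_zero_nat C).const_add 1
    simpa using h3
  have h4 := h1.pow p
  simpa using h4

lemma simF_eq (s n : ℕ) : simF s n = simF' s n := rfl

lemma simF_card (s n : ℕ) : (simF s n).card = (n + s).choose s := by
  rw [simF_eq, simF'_card]

section Main
variable {s : ℕ} (a : Fin s → ℕ) (ha : ∀ i, 0 < a i)
include ha

lemma sols_mono {c : ℕ} (hc : NRep a c) (m : ℕ) :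
    (solsF a m).card ≤ (solsF a (m + c)).card := by
  obtain ⟨y, hy⟩ := hc
  apply Finset.card_le_card_of_injOn (fun x => x + y)
  · intro x hx
    refine (mem_solsF a ha).2 ?_
    have hx' := (mem_solsF a ha).1 hx
    calc ∑ i, a i * (x + y) i = ∑ i, (a i * x i + a i * y i) := by
          refine Finset.sum_congr rfl fun i _ => ?_
          simp [Pi.add_apply, Nat.mul_add]
      _ = m + c := by rw [Finset.sum_add_distrib, hx', hy]
  · intro x _ x' _ h
    funext i
    have h2 := congrFun h i
    simp only [Pi.add_apply] at h2
    omega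

lemma T_add (n k : ℕ) :
    (lessF a (n + k)).card
      = (lessF a n).card + ∑ m ∈ Finset.Ico (n+1) (n+k+1), (solsF a m).card := by
  rw [lessF_card_eq_sum a ha, lessF_card_eq_sum a ha]
  rw [Finset.range_eq_Ico, Finset.range_eq_Ico]
  exact (Finset.sum_Ico_consecutive (fun m => (solsF a m).card) (Nat.zero_le (n+1)) (by omega : n+1 ≤ n+k+1)).symm

lemma F5 {B : ℕ} (hB : ∀ c : ℕ, B ≤ c → NRep a c) (ν k : ℕ) :
    (lessF a (ν + B)).card + k * (solsF a ν).card ≤ (lessF a (ν + B + k)).card := by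
  rw [T_add a ha (ν + B) k]
  refine Nat.add_le_add_left ?_ _
  calc k * (solsF a ν).card = ∑ _m ∈ Finset.Ico (ν+B+1) (ν+B+k+1), (solsF a ν).card := by
        rw [Finset.sum_const, Nat.card_Ico]
        congr 1; omega
    _ ≤ ∑ m ∈ Finset.Ico (ν+B+1) (ν+B+k+1), (solsF a m).card := by
        refine Finset.sum_le_sum fun m hm => ?_
        rw [Finset.mem_Ico] at hm
        have h1 : ν + (m - ν) = m := by omega
        have h2 := sols_mono a ha (hB (m - ν) (by omega)) ν
        rwa [h1] at h2

lemma F6 {B : ℕ} (hB : ∀ c : ℕ, B ≤ c → NRep a c) (w k : ℕ) :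
    (lessF a (w + k)).card ≤ (lessF a w).card + k * (solsF a (w + B + 2*k)).card := by
  rw [T_add a ha w k]
  refine Nat.add_le_add_left ?_ _
  calc ∑ m ∈ Finset.Ico (w+1) (w+k+1), (solsF a m).card
      ≤ ∑ _m ∈ Finset.Ico (w+1) (w+k+1), (solsF a (w + B + 2*k)).card := by
        refine Finset.sum_le_sum fun m hm => ?_
        rw [Finset.mem_Ico] at hm
        have h1 : m + (w + B + 2*k - m) = w + B + 2*k := by omega
        have h2 := sols_mono a ha (hB (w + B + 2*k - m) (by omega)) m
        rwa [h1] at h2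
    _ = k * (solsF a (w + B + 2*k)).card := by
        rw [Finset.sum_const, Nat.card_Ico]
        congr 1; omega

lemma T_lower (n : ℕ) :
    n ^ s ≤ s.factorial * ((lessF a n).card * ∏ i, a i) := by
  calc n ^ s ≤ (n+1) ^ s := Nat.pow_le_pow_left (by omega) s
    _ ≤ (n+1).ascFactorial s := Nat.pow_succ_le_ascFactorial (n+1) s
    _ = s.factorial * (n + s).choose s := Nat.ascFactorial_eq_factorial_mul_choose n s
    _ = s.factorial * (simF s n).card := by rw [simF_card]
    _ ≤ s.factorial * ((lessF a n).card * ∏ i, a i) :=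
        Nat.mul_le_mul_left _ (simF_le_lessF_mul a ha n)

lemma T_upper (n : ℕ) :
    s.factorial * ((lessF a n).card * ∏ i, a i) ≤ (n + ∑ i, a i) ^ s := by
  have hAA : (∑ i, (a i - 1)) + s = ∑ i, a i := by
    calc (∑ i, (a i - 1)) + s = (∑ i, (a i - 1)) + ∑ _i : Fin s, 1 := by simp
      _ = ∑ i, ((a i - 1) + 1) := by rw [Finset.sum_add_distrib]
      _ = ∑ i, a i := Finset.sum_congr rfl fun i _ => by have := ha i; omega
  calc s.factorial * ((lessF a n).card * ∏ i, a i)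
      ≤ s.factorial * (simF s (n + ∑ i, (a i - 1))).card :=
        Nat.mul_le_mul_left _ (lessF_mul_le a ha n)
    _ = s.factorial * ((n + ∑ i, (a i - 1)) + s).choose s := by rw [simF_card]
    _ = ((n + ∑ i, (a i - 1)) + 1).ascFactorial s :=
        (Nat.ascFactorial_eq_factorial_mul_choose _ s).symm
    _ ≤ ((n + ∑ i, (a i - 1)) + s) ^ s := Nat.ascFactorial_le_pow_add _ s
    _ = (n + ∑ i, a i) ^ s := by rw [Nat.add_assoc, hAA]

end Main

set_option maxHeartbeats 1000000 in
lemma main_aux (s : ℕ) (hs1 : 1 ≤ s) (a : Fin s → ℕ) (ha : ∀ i, 0 < a i)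
    (hgcd : Finset.univ.gcd a = 1) :
    Filter.Tendsto
      (fun ν : ℕ => ((solsF a ν).card : ℝ) * ((s-1).factorial : ℝ) * (∏ i, (a i : ℝ))
        / (ν:ℝ) ^ (s-1))
      Filter.atTop (nhds 1) := by
  obtain ⟨B, hB⟩ := rep_exists_bound a hgcd
  set A : ℕ := ∑ i, a i with hA
  set P : ℕ := ∏ i, a i with hP
  have hPpos : 0 < P := Finset.prod_pos (fun i _ => ha i)
  have hsA : s ≤ A := by
    calc s = ∑ _i : Fin s, 1 := by simp
      _ ≤ ∑ i, a i := Finset.sum_le_sum fun i _ => ha i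
  set p : ℕ := s - 1 with hp
  have hsp : p + 1 = s := by omega
  have hfac : (s.factorial : ℝ) = s * (p.factorial : ℝ) := by
    rw [← hsp]
    push_cast [Nat.factorial_succ]
    ring
  have hprod : (∏ i, (a i : ℝ)) = (P:ℝ) := by rw [hP]; push_cast; rfl
  have hsumc : (∑ i, (a i : ℝ)) = (A:ℝ) := by rw [hA]; push_cast; rfl
  have hT : ∀ n : ℕ, ((n:ℝ))^s ≤ (s.factorial : ℝ) * (((lessF a n).card : ℝ) * (P:ℝ))
      ∧ (s.factorial : ℝ) * (((lessF a n).card : ℝ) * (P:ℝ)) ≤ ((n:ℝ) + (A:ℝ))^s := by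
    intro n
    constructor
    · have h0 := T_lower a ha n
      have h5 := (Nat.cast_le (α := ℝ)).2 h0
      push_cast at h5
      rw [hprod] at h5
      linarith
    · have h0 := T_upper a ha n
      have h5 := (Nat.cast_le (α := ℝ)).2 h0
      push_cast at h5
      rw [hprod, hsumc] at h5
      linarith
  rw [Metric.tendsto_nhds]
  intro ε hε
  set ε' : ℝ := min ε 1 with hε'
  have hε'pos : 0 < ε' := lt_min hε one_pos
  have hε'le : ε' ≤ 1 := min_le_right _ _
  have hε'leε : ε' ≤ ε := min_le_left _ _
  obtain ⟨k, hk1, hk2⟩ : ∃ k : ℕ, A ≤ k ∧ (A:ℝ)/(k:ℝ) ≤ ε'/4 := by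
    refine ⟨max A (⌈(4*(A:ℝ))/ε'⌉₊ + 1), le_max_left _ _, ?_⟩
    set k := max A (⌈(4*(A:ℝ))/ε'⌉₊ + 1) with hk
    have hkpos : 0 < k := lt_of_lt_of_le (Nat.succ_pos _) (le_max_right _ _)
    have hkR : (0:ℝ) < k := by exact_mod_cast hkpos
    have hstep : ⌈(4*(A:ℝ))/ε'⌉₊ ≤ k := le_trans (Nat.le_succ _) (le_max_right _ _)
    have h1 : (4*(A:ℝ))/ε' ≤ (k:ℝ) := le_trans (Nat.le_ceil _) (Nat.cast_le.2 hstep)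
    rw [div_le_iff₀ hε'pos] at h1
    rw [div_le_div_iff₀ hkR (by norm_num : (0:ℝ) < 4)]
    nlinarith
  have hkpos : 0 < k := by omega
  have hkR : (0:ℝ) < k := by exact_mod_cast hkpos
  have hkAreal : (A:ℝ) ≤ ε'/4 * k := by rwa [div_le_iff₀ hkR] at hk2
  have hAnn : (0:ℝ) ≤ A := Nat.cast_nonneg _
  have hup : ∀ᶠ ν : ℕ in Filter.atTop,
      (((ν:ℝ) + ((B+k+A : ℕ):ℝ))/(ν:ℝ))^p ≤ 1 + ε'/4 :=
    (ratio_pow_tendsto ((B+k+A : ℕ):ℝ) p).eventually (eventually_le_nhds (by linarith))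
  have hlo : ∀ᶠ ν : ℕ in Filter.atTop,
      1 - ε'/4 ≤ (((ν:ℝ) + (-((B+2*k : ℕ):ℝ)))/(ν:ℝ))^p :=
    (ratio_pow_tendsto (-((B+2*k : ℕ):ℝ)) p).eventually (eventually_ge_nhds (by linarith))
  filter_upwards [hup, hlo, Filter.eventually_ge_atTop (B + 2*k + 1)] with ν h1 h2 h3
  have hνR : (0:ℝ) < (ν:ℝ) := by exact_mod_cast (by omega : 0 < ν)
  have hνp : (0:ℝ) < (ν:ℝ)^p := pow_pos hνR p
  set Nν : ℝ := ((solsF a ν).card : ℝ) with hNν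
  have hNνnn : 0 ≤ Nν := Nat.cast_nonneg _
  set G : ℝ := Nν * (p.factorial : ℝ) * (P:ℝ) with hG
  have hGnn : 0 ≤ G := by positivity
  -- UPPER BOUND
  have hcast5 : (k:ℝ) * Nν ≤ ((lessF a (ν+B+k)).card : ℝ) - ((lessF a (ν+B)).card : ℝ) := by
    have h4 := F5 a ha hB ν k
    have h5 := (Nat.cast_le (α := ℝ)).2 h4
    push_cast at h5
    linarith
  set R : ℝ := (ν:ℝ) + ((B+k+A : ℕ):ℝ) with hR
  have hkey_up : (k:ℝ) * G ≤ ((k:ℝ) + A) * R^p := by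
    have c1 : (k:ℝ) * Nν * ((s.factorial : ℝ) * P)
        ≤ ((s.factorial : ℝ) * (((lessF a (ν+B+k)).card : ℝ) * P))
          - ((s.factorial : ℝ) * (((lessF a (ν+B)).card : ℝ) * P)) := by
      have hfp : (0:ℝ) ≤ (s.factorial : ℝ) * P := by positivity
      have := mul_le_mul_of_nonneg_right hcast5 hfp
      linarith [this]
    have c2 : ((s.factorial : ℝ) * (((lessF a (ν+B+k)).card : ℝ) * P)) ≤ (((ν+B+k:ℕ):ℝ) + A)^s :=
      (hT (ν+B+k)).2
    have c3 : (((ν+B:ℕ):ℝ))^s ≤ (s.factorial : ℝ) * (((lessF a (ν+B)).card : ℝ) * P) :=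
      (hT (ν+B)).1
    have c4 : (((ν+B+k:ℕ):ℝ) + A)^s - (((ν+B:ℕ):ℝ))^s ≤ (s:ℝ) * ((k:ℝ) + A) * R^p := by
      have hxy : ((ν+B:ℕ):ℝ) ≤ ((ν+B+k:ℕ):ℝ) + A := by push_cast; linarith
      have hx : (0:ℝ) ≤ ((ν+B:ℕ):ℝ) := Nat.cast_nonneg _
      have h6 := pow_sub_pow_le_upper p hx hxy
      rw [hsp] at h6
      have he1 : ((ν+B+k:ℕ):ℝ) + A = R := by rw [hR]; push_cast; ring
      have he2 : ((ν+B+k:ℕ):ℝ) + A - ((ν+B:ℕ):ℝ) = (k:ℝ) + A := by push_cast; ring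
      calc (((ν+B+k:ℕ):ℝ) + A)^s - (((ν+B:ℕ):ℝ))^s
          ≤ (p+1 : ℝ) * ((((ν+B+k:ℕ):ℝ) + A) - ((ν+B:ℕ):ℝ)) * (((ν+B+k:ℕ):ℝ) + A)^p := h6
        _ = (s:ℝ) * ((k:ℝ) + A) * R^p := by
            rw [he2, he1]
            congr 2
            exact_mod_cast congrArg (fun t : ℕ => (t:ℝ)) hsp
    have c5 : (k:ℝ) * Nν * ((s.factorial : ℝ) * P) ≤ (s:ℝ) * ((k:ℝ) + A) * R^p := by
      linarith
    rw [hfac] at c5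
    have hsR : (0:ℝ) < s := by exact_mod_cast hs1
    have c6 : (s:ℝ) * ((k:ℝ) * G) ≤ (s:ℝ) * (((k:ℝ) + A) * R^p) := by
      have hgg : (s:ℝ) * ((k:ℝ) * G) = (k:ℝ) * Nν * ((s:ℝ) * (p.factorial:ℝ) * (P:ℝ)) := by
        rw [hG]; ring
      rw [hgg]
      linarith [c5]
    exact le_of_mul_le_mul_left c6 hsR
  have hRν : (0:ℝ) ≤ R / ν := by
    apply div_nonneg _ (le_of_lt hνR)
    rw [hR]; positivity
  have hfup : G / (ν:ℝ)^p ≤ (((k:ℝ) + A)/k) * (R/ν)^p := by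
    rw [div_pow, div_mul_div_comm, div_le_div_iff₀ hνp (by positivity)]
    calc G * ((k:ℝ) * (ν:ℝ)^p) = ((k:ℝ) * G) * (ν:ℝ)^p := by ring
      _ ≤ (((k:ℝ) + A) * R^p) * (ν:ℝ)^p :=
          mul_le_mul_of_nonneg_right hkey_up (le_of_lt hνp)
      _ = ((k:ℝ) + A) * R^p * (ν:ℝ)^p := by ring
  have hfup2 : G / (ν:ℝ)^p ≤ 1 + 3*ε'/4 := by
    have e1 : ((k:ℝ) + A)/k ≤ 1 + ε'/4 := by
      rw [div_le_iff₀ hkR]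
      nlinarith
    have e2 : (R/ν)^p ≤ 1 + ε'/4 := by
      have : R/ν = ((ν:ℝ) + ((B+k+A : ℕ):ℝ))/(ν:ℝ) := rfl
      rw [this]
      exact h1
    have e3 : (0:ℝ) ≤ (R/ν)^p := pow_nonneg hRν p
    calc G / (ν:ℝ)^p ≤ (((k:ℝ) + A)/k) * (R/ν)^p := hfup
      _ ≤ (1 + ε'/4) * (1 + ε'/4) := by
          apply mul_le_mul e1 e2 e3 (by linarith)
      _ ≤ 1 + 3*ε'/4 := by nlinarith
  -- LOWER BOUND
  set w : ℕ := ν - (B + 2*k) with hw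
  have hwv : w + B + 2*k = ν := by omega
  have hwR : ((w:ℕ):ℝ) = (ν:ℝ) - ((B+2*k : ℕ):ℝ) := by
    have : ((B+2*k : ℕ):ℝ) ≤ (ν:ℝ) := by exact_mod_cast (by omega : B+2*k ≤ ν)
    rw [hw]
    push_cast [Nat.cast_sub (by omega : B+2*k ≤ ν)]
    ring
  have hcast6 : ((lessF a (w+k)).card : ℝ) - ((lessF a w).card : ℝ) ≤ (k:ℝ) * Nν := by
    have h4 := F6 a ha hB w k
    rw [hwv] at h4
    have h5 := (Nat.cast_le (α := ℝ)).2 h4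
    push_cast at h5
    linarith
  have hkey_lo : ((k:ℝ) - A) * ((w:ℕ):ℝ)^p ≤ (k:ℝ) * G := by
    have c1 : ((s.factorial : ℝ) * (((lessF a (w+k)).card : ℝ) * P))
        - ((s.factorial : ℝ) * (((lessF a w).card : ℝ) * P))
        ≤ (k:ℝ) * Nν * ((s.factorial : ℝ) * P) := by
      have hfp : (0:ℝ) ≤ (s.factorial : ℝ) * P := by positivity
      have := mul_le_mul_of_nonneg_right hcast6 hfp
      linarith [this]
    have c2 : (((w+k:ℕ):ℝ))^s ≤ (s.factorial : ℝ) * (((lessF a (w+k)).card : ℝ) * P) :=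
      (hT (w+k)).1
    have c3 : (s.factorial : ℝ) * (((lessF a w).card : ℝ) * P) ≤ (((w:ℕ):ℝ) + A)^s :=
      (hT w).2
    have c4 : (s:ℝ) * ((k:ℝ) - A) * ((w:ℕ):ℝ)^p ≤ (((w+k:ℕ):ℝ))^s - (((w:ℕ):ℝ) + A)^s := by
      have hxy : ((w:ℕ):ℝ) + A ≤ ((w+k:ℕ):ℝ) := by
        push_cast
        have : (A:ℝ) ≤ k := by exact_mod_cast hk1
        linarith
      have hx : (0:ℝ) ≤ ((w:ℕ):ℝ) + A := by positivity
      have h6 := pow_sub_pow_ge_lower p hx hxy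
      rw [hsp] at h6
      have he2 : ((w+k:ℕ):ℝ) - (((w:ℕ):ℝ) + A) = (k:ℝ) - A := by push_cast; ring
      have hkA' : (0:ℝ) ≤ (k:ℝ) - A := by
        have : (A:ℝ) ≤ k := by exact_mod_cast hk1
        linarith
      calc (s:ℝ) * ((k:ℝ) - A) * ((w:ℕ):ℝ)^p
          ≤ (s:ℝ) * ((k:ℝ) - A) * (((w:ℕ):ℝ) + A)^p := by
            apply mul_le_mul_of_nonneg_left (pow_le_pow_left₀ (Nat.cast_nonneg _) (by linarith) p)
            positivity
        _ = (p+1 : ℝ) * (((w+k:ℕ):ℝ) - (((w:ℕ):ℝ) + A)) * (((w:ℕ):ℝ) + A)^p := by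
            rw [he2]
            congr 2
            exact_mod_cast (congrArg (fun t : ℕ => (t:ℝ)) hsp).symm
        _ ≤ (((w+k:ℕ):ℝ))^s - (((w:ℕ):ℝ) + A)^s := h6
    have c5 : (s:ℝ) * ((k:ℝ) - A) * ((w:ℕ):ℝ)^p ≤ (k:ℝ) * Nν * ((s.factorial : ℝ) * P) := by
      linarith
    rw [hfac] at c5
    have hsR : (0:ℝ) < s := by exact_mod_cast hs1
    have c6 : (s:ℝ) * (((k:ℝ) - A) * ((w:ℕ):ℝ)^p) ≤ (s:ℝ) * ((k:ℝ) * G) := by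
      have hgg : (s:ℝ) * ((k:ℝ) * G) = (k:ℝ) * Nν * ((s:ℝ) * (p.factorial:ℝ) * (P:ℝ)) := by
        rw [hG]; ring
      rw [hgg]
      linarith [c5]
    exact le_of_mul_le_mul_left c6 hsR
  have hflo : (((k:ℝ) - A)/k) * (((w:ℕ):ℝ)/ν)^p ≤ G / (ν:ℝ)^p := by
    rw [div_pow, div_mul_div_comm, div_le_div_iff₀ (by positivity) hνp]
    calc ((k:ℝ) - A) * ((w:ℕ):ℝ)^p * (ν:ℝ)^p
        ≤ ((k:ℝ) * G) * (ν:ℝ)^p := mul_le_mul_of_nonneg_right hkey_lo (le_of_lt hνp)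
      _ = G * ((k:ℝ) * (ν:ℝ)^p) := by ring
  have hflo2 : 1 - ε'/2 ≤ G / (ν:ℝ)^p := by
    have e1 : 1 - ε'/4 ≤ ((k:ℝ) - A)/k := by
      rw [le_div_iff₀ hkR]
      nlinarith
    have e2 : 1 - ε'/4 ≤ (((w:ℕ):ℝ)/ν)^p := by
      have he : ((w:ℕ):ℝ)/ν = ((ν:ℝ) + (-((B+2*k : ℕ):ℝ)))/(ν:ℝ) := by
        rw [hwR]; ring_nf
      rw [he]
      exact h2
    have e4 : (0:ℝ) ≤ 1 - ε'/4 := by linarith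
    calc (1:ℝ) - ε'/2 ≤ (1 - ε'/4) * (1 - ε'/4) := by nlinarith
      _ ≤ (((k:ℝ) - A)/k) * (((w:ℕ):ℝ)/ν)^p := by
          apply mul_le_mul e1 e2 e4 ?_
          have : (A:ℝ) ≤ k := by exact_mod_cast hk1
          apply div_nonneg (by linarith) (le_of_lt hkR)
      _ ≤ G / (ν:ℝ)^p := hflo
  -- conclude
  have hgoal : (Nν * ((p.factorial : ℝ)) * (∏ i, (a i : ℝ)) / (ν:ℝ)^p) = G / (ν:ℝ)^p := by
    rw [hG, hprod]
  rw [Real.dist_eq]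
  rw [hgoal]
  rw [abs_sub_lt_iff]
  constructor <;> linarith

lemma pos_card {s : ℕ} (a : Fin s → ℕ) (ha : ∀ i, 0 < a i) (n : ℕ) (hn : (∑ i, a i) ≤ n) :
    {x : Fin s → ℕ | (∀ i, 0 < x i) ∧ ∑ i, a i * x i = n}.ncard
      = (solsF a (n - ∑ i, a i)).card := by
  classical
  have hinj : Function.Injective (fun y : Fin s → ℕ => fun i => y i + 1) := by
    intro y z h
    funext i
    have h2 := congrFun h i
    simpa using h2
  have hset : {x : Fin s → ℕ | (∀ i, 0 < x i) ∧ ∑ i, a i * x i = n}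
      = ↑((solsF a (n - ∑ i, a i)).image (fun y => fun i => y i + 1)) := by
    ext x
    simp only [Set.mem_setOf_eq, Finset.coe_image, Set.mem_image, Finset.mem_coe]
    constructor
    · rintro ⟨hpos, hsum⟩
      have key : ∑ i, a i * x i = (∑ i, a i * (x i - 1)) + ∑ i, a i := by
        rw [← Finset.sum_add_distrib]
        refine Finset.sum_congr rfl fun i _ => ?_
        have h5 := hpos i
        have h6 : x i = (x i - 1) + 1 := by omega
        calc a i * x i = a i * ((x i - 1) + 1) := by rw [← h6]
          _ = a i * (x i - 1) + a i := by ring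
      refine ⟨fun i => x i - 1, (mem_solsF a ha).2 (by omega), ?_⟩
      funext i
      have h5 := hpos i
      simp only []
      omega
    · rintro ⟨y, hy, rfl⟩
      have hy' := (mem_solsF a ha).1 hy
      refine ⟨fun i => Nat.succ_pos _, ?_⟩
      calc ∑ i, a i * (y i + 1) = (∑ i, a i * y i) + ∑ i, a i := by
            rw [← Finset.sum_add_distrib]
            exact Finset.sum_congr rfl fun i _ => by ring
        _ = n := by omega
  rw [hset, Set.ncard_coe_finset, Finset.card_image_of_injective _ hinj]

theorem stmt_17 (s : ℕ) (hs : 2 ≤ s) (a : Fin s → ℕ) (ha : ∀ i, 0 < a i)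
    (hgcd : Finset.univ.gcd a = 1) :
    Filter.Tendsto
      (fun n : ℕ =>
        ({x : Fin s → ℕ | (∀ i, 0 < x i) ∧ ∑ i, a i * x i = n}.ncard : ℝ) *
          (Nat.factorial (s - 1)) * (∏ i, (a i : ℝ)) / (n : ℝ) ^ (s - 1))
      Filter.atTop (nhds 1) := by
  have hs1 : 1 ≤ s := by omega
  have hmain := main_aux s hs1 a ha hgcd
  set A : ℕ := ∑ i, a i with hA
  have h1 := hmain.comp (Filter.tendsto_sub_atTop_nat A)
  have h2 := ratio_pow_tendsto (-(A:ℝ)) (s-1)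
  have h3 := h1.mul h2
  rw [mul_one] at h3
  refine Filter.Tendsto.congr' ?_ h3
  filter_upwards [Filter.eventually_ge_atTop (A + 1)] with n hn
  have hAn : A ≤ n := by omega
  have hcast : ((n - A : ℕ):ℝ) = (n:ℝ) - (A:ℝ) := by
    push_cast [Nat.cast_sub hAn]
    ring
  have hν : (0:ℝ) < (n:ℝ) := by exact_mod_cast (by omega : 0 < n)
  have hνA : (0:ℝ) < (n:ℝ) - (A:ℝ) := by
    have : ((A:ℕ):ℝ) < (n:ℝ) := by exact_mod_cast (by omega : A < n)
    linarith
  show ((solsF a (n - A)).card : ℝ) * ((s-1).factorial : ℝ) * (∏ i, (a i : ℝ))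
      / ((n - A : ℕ):ℝ) ^ (s-1) * (((n:ℝ) + -(A:ℝ))/(n:ℝ)) ^ (s-1) = _
  rw [pos_card a ha n hAn]
  rw [hcast]
  have hne1 : (n:ℝ) ≠ 0 := ne_of_gt hν
  have hne2 : (n:ℝ) - (A:ℝ) ≠ 0 := ne_of_gt hνA
  have hrw : (n:ℝ) + -(A:ℝ) = (n:ℝ) - (A:ℝ) := by ring
  rw [hrw, div_pow]
  field_simp
  rw [hA]; ring
end
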